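/- arXiv:2306.03958 — 6 statements merged into one kernel-verified Lean document; each statement's English description precedes it below -/
import Mathlib

section
/- Let α ∈ (0,1) and let Γ ⊂ ℝ² be a Jordan curve. Then Γ admits a loop parametrization φ : [0,1] → Γ that is α-Hölder with some constant C ≥ 0 if and only if Γ has finite (1/α)-content. -/
open Set Metric

/-- A loop parametrization of `Γ` on `[0, ℓ]`: a continuous surjection onto `Γ`
with equal endpoints, injective on `[0, ℓ)`. -/
def IsLoopParam (φ : ℝ → EuclideanSpace ℝ (Fin 2)) (ℓ : ℝ)
    (Γ : Set (EuclideanSpace ℝ (Fin 2))) : Prop :=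
  ContinuousOn φ (Set.Icc 0 ℓ) ∧ φ '' Set.Icc 0 ℓ = Γ ∧ φ 0 = φ ℓ ∧
    Set.InjOn φ (Set.Ico 0 ℓ)

/-- The set of all sums `Σ |ψ(t_{k+1}) - ψ(t_k)|^p` over finite increasing sequences
`0 ≤ t₁ < ⋯ < tₙ ≤ 1`; its supremum is the `p`-content of the curve parametrized by `ψ`. -/
def pContentSums (p : ℝ) (ψ : ℝ → EuclideanSpace ℝ (Fin 2)) : Set ℝ :=
  {S | ∃ (n : ℕ) (t : Fin (n + 1) → ℝ), StrictMono t ∧ (∀ i, t i ∈ Set.Icc (0:ℝ) 1) ∧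
    S = ∑ i : Fin n, dist (ψ (t i.succ)) (ψ (t i.castSucc)) ^ p}

open Set Metric

namespace JordanContent

variable {E : Type*} [PseudoMetricSpace E]

/-- Sum of `p`-th powers of distances along consecutive points of a list. -/
noncomputable def pairSum (p : ℝ) (f : ℝ → E) : List ℝ → ℝ
  | a :: b :: l => dist (f b) (f a) ^ p + pairSum p f (b :: l)
  | _ => 0

@[simp] lemma pairSum_nil (p : ℝ) (f : ℝ → E) : pairSum p f ([] : List ℝ) = 0 := rfl

@[simp] lemma pairSum_single (p : ℝ) (f : ℝ → E) (a : ℝ) : pairSum p f [a] = 0 := rfl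

lemma pairSum_cons_cons (p : ℝ) (f : ℝ → E) (a b : ℝ) (l : List ℝ) :
    pairSum p f (a :: b :: l) = dist (f b) (f a) ^ p + pairSum p f (b :: l) := rfl

lemma pairSum_nonneg (p : ℝ) (f : ℝ → E) : ∀ l : List ℝ, 0 ≤ pairSum p f l
  | [] => le_refl 0
  | [_] => le_refl 0
  | _ :: b :: l => by
      rw [pairSum_cons_cons]
      exact add_nonneg (Real.rpow_nonneg dist_nonneg p) (pairSum_nonneg p f (b :: l))

/-- Splitting a pair sum at an interior point of the list. -/
lemma pairSum_append (p : ℝ) (f : ℝ → E) (m : ℝ) (l₂ : List ℝ) :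
    ∀ l₁ : List ℝ, pairSum p f (l₁ ++ m :: l₂) = pairSum p f (l₁ ++ [m]) + pairSum p f (m :: l₂)
  | [] => by simp
  | [a] => by simp [pairSum_cons_cons]
  | a :: b :: l₁ => by
      have ih := pairSum_append p f m l₂ (b :: l₁)
      simp only [List.cons_append, pairSum_cons_cons] at ih ⊢
      rw [ih]; ring

lemma le_pairSum_append_single (p : ℝ) (f : ℝ → E) (l : List ℝ) (c : ℝ) :
    pairSum p f l ≤ pairSum p f (l ++ [c]) := by
  rcases List.eq_nil_or_concat l with rfl | ⟨L, a, rfl⟩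
  · simpa using le_refl (0:ℝ)
  · rw [List.concat_eq_append]
    calc pairSum p f (L ++ [a]) ≤ pairSum p f (L ++ [a]) + pairSum p f (a :: [c]) :=
          le_add_of_nonneg_right (pairSum_nonneg p f _)
      _ = pairSum p f (L ++ a :: [c]) := (pairSum_append p f a [c] L).symm
      _ = pairSum p f ((L ++ [a]) ++ [c]) := by rw [List.append_assoc]; rfl

lemma le_pairSum_cons (p : ℝ) (f : ℝ → E) (l : List ℝ) (c : ℝ) :
    pairSum p f l ≤ pairSum p f (c :: l) := by
  cases l with
  | nil => simp
  | cons b l => rw [pairSum_cons_cons]; nlinarith [Real.rpow_nonneg (dist_nonneg (x := f b) (y := f c)) p]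

lemma pairSum_reverse (p : ℝ) (f : ℝ → E) : ∀ l : List ℝ, pairSum p f l.reverse = pairSum p f l
  | [] => rfl
  | [a] => rfl
  | a :: b :: l => by
      have ih := pairSum_reverse p f (b :: l)
      have h1 : (a :: b :: l).reverse = l.reverse ++ (b :: [a]) := by simp
      rw [h1, pairSum_append]
      have h2 : l.reverse ++ [b] = (b :: l).reverse := by simp
      rw [h2, ih, pairSum_cons_cons, pairSum_cons_cons, pairSum_single, dist_comm]; ring

lemma pairSum_map (p : ℝ) (f : ℝ → E) (g : ℝ → ℝ) : ∀ l : List ℝ,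
    pairSum p f (l.map g) = pairSum p (f ∘ g) l
  | [] => rfl
  | [a] => rfl
  | a :: b :: l => by
      have ih := pairSum_map p f g (b :: l)
      simp only [List.map_cons] at ih ⊢
      rw [pairSum_cons_cons, pairSum_cons_cons, ih]; rfl

end JordanContent
namespace JordanContent2
open JordanContent
variable {E : Type*} [PseudoMetricSpace E]

def lSums (p : ℝ) (f : ℝ → E) (s t : ℝ) : Set ℝ :=
  {S | ∃ l : List ℝ, l.Pairwise (· < ·) ∧ (∀ x ∈ l, x ∈ Set.Icc s t) ∧ S = pairSum p f l}

lemma zero_mem_lSums (p : ℝ) (f : ℝ → E) (s t : ℝ) : (0:ℝ) ∈ lSums p f s t :=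
  ⟨[], by simp, by simp, rfl⟩

lemma lSums_nonempty (p : ℝ) (f : ℝ → E) (s t : ℝ) : (lSums p f s t).Nonempty :=
  ⟨0, zero_mem_lSums p f s t⟩

lemma lSums_nonneg {p : ℝ} {f : ℝ → E} {s t S : ℝ} (h : S ∈ lSums p f s t) : 0 ≤ S := by
  obtain ⟨l, -, -, rfl⟩ := h; exact pairSum_nonneg p f l

lemma lSums_mono (p : ℝ) (f : ℝ → E) {s t s' t' : ℝ} (h : Set.Icc s t ⊆ Set.Icc s' t') :
    lSums p f s t ⊆ lSums p f s' t' := by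
  rintro S ⟨l, hsort, hmem, rfl⟩
  exact ⟨l, hsort, fun x hx => h (hmem x hx), rfl⟩

noncomputable def locV (p : ℝ) (f : ℝ → E) (s t : ℝ) : ℝ := sSup (lSums p f s t)

section
variable {p : ℝ} {f : ℝ → E} (hb : BddAbove (lSums p f 0 1))

include hb

lemma bddAbove_lSums {s t : ℝ} (h : Set.Icc s t ⊆ Set.Icc (0:ℝ) 1) :
    BddAbove (lSums p f s t) := hb.mono (lSums_mono p f h)

lemma le_locV {s t S : ℝ} (h : Set.Icc s t ⊆ Set.Icc (0:ℝ) 1) (hS : S ∈ lSums p f s t) :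
    S ≤ locV p f s t := le_csSup (bddAbove_lSums hb h) hS

lemma locV_nonneg {s t : ℝ} (h : Set.Icc s t ⊆ Set.Icc (0:ℝ) 1) : 0 ≤ locV p f s t :=
  le_locV hb h (zero_mem_lSums p f s t)

lemma locV_mono {s t s' t' : ℝ} (h : Set.Icc s t ⊆ Set.Icc s' t')
    (h' : Set.Icc s' t' ⊆ Set.Icc (0:ℝ) 1) : locV p f s t ≤ locV p f s' t' :=
  csSup_le_csSup (bddAbove_lSums hb h') (lSums_nonempty p f s t) (lSums_mono p f h)

lemma dist_rpow_le_locV {s t a b : ℝ} (h : Set.Icc s t ⊆ Set.Icc (0:ℝ) 1)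
    (hsa : s ≤ a) (hab : a < b) (hbt : b ≤ t) :
    dist (f b) (f a) ^ p ≤ locV p f s t := by
  refine le_locV hb h ⟨[a, b], ?_, ?_, ?_⟩
  · simp [hab]
  · intro x hx
    simp only [List.mem_cons, List.not_mem_nil, or_false] at hx
    rcases hx with rfl | rfl
    · exact ⟨hsa, le_trans (le_of_lt hab) hbt⟩
    · exact ⟨le_trans hsa (le_of_lt hab), hbt⟩
  · rw [pairSum_cons_cons, pairSum_single]; ring

lemma locV_superadd {s m u : ℝ} (h0 : 0 ≤ s) (hsm : s ≤ m) (hmu : m ≤ u) (hu1 : u ≤ 1) :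
    locV p f s m + locV p f m u ≤ locV p f s u := by
  have hsub : Set.Icc s u ⊆ Set.Icc (0:ℝ) 1 := Set.Icc_subset_Icc h0 hu1
  have key : ∀ a ∈ lSums p f s m, ∀ b ∈ lSums p f m u, a + b ≤ locV p f s u := by
    rintro a ⟨la, hla_sort, hla_mem, rfl⟩ b ⟨lb, hlb_sort, hlb_mem, rfl⟩
    rcases List.eq_nil_or_concat la with rfl | ⟨L, x, rfl⟩
    · simp only [pairSum_nil, zero_add]
      exact le_locV hb hsub (lSums_mono p f (Set.Icc_subset_Icc hsm le_rfl) ⟨lb, hlb_sort, hlb_mem, rfl⟩)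
    rcases lb with _ | ⟨y, B⟩
    · simp only [pairSum_nil, add_zero]
      exact le_locV hb hsub (lSums_mono p f (Set.Icc_subset_Icc le_rfl hmu) ⟨_, hla_sort, hla_mem, rfl⟩)
    rw [List.concat_eq_append] at hla_sort hla_mem ⊢
    have hx : x ∈ Set.Icc s m := hla_mem x (by simp)
    have hy : y ∈ Set.Icc m u := hlb_mem y (by simp)
    have hLx : ∀ w ∈ L, w < x := by
      have := (List.pairwise_append.mp hla_sort).2.2
      intro w hw; exact this w hw x (by simp)
    have hLsort : L.Pairwise (· < ·) := (List.pairwise_append.mp hla_sort).1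
    have hyB : ∀ z ∈ B, y < z := fun z hz => (List.pairwise_cons.mp hlb_sort).1 z hz
    have hBsort : B.Pairwise (· < ·) := (List.pairwise_cons.mp hlb_sort).2
    have hmemc : ∀ z ∈ L ++ [x] ++ (y :: B), z ∈ Set.Icc s u := by
      intro z hz
      rcases List.mem_append.mp hz with hz1 | hz2
      · exact Set.Icc_subset_Icc le_rfl hmu (hla_mem z hz1)
      · exact Set.Icc_subset_Icc hsm le_rfl (hlb_mem z hz2)
    rcases eq_or_lt_of_le (le_trans hx.2 hy.1) with heq | hlt
    · -- x = y : merge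
      subst heq
      refine le_of_eq_of_le ?_ (le_locV hb hsub ⟨L ++ x :: B, ?_, ?_, rfl⟩)
      · exact (pairSum_append p f x B L).symm
      · refine List.pairwise_append.mpr ⟨hLsort, List.pairwise_cons.mpr ⟨hyB, hBsort⟩, ?_⟩
        intro w hw z hz
        rcases List.mem_cons.mp hz with rfl | hz'
        · exact hLx w hw
        · exact lt_trans (hLx w hw) (hyB z hz')
      · intro z hz
        apply hmemc
        rcases List.mem_append.mp hz with hz1 | hz2
        · exact List.mem_append.mpr (Or.inl (List.mem_append.mpr (Or.inl hz1)))
        · rcases List.mem_cons.mp hz2 with rfl | hz3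
          · simp
          · simp [hz3]
    · -- x < y : concatenate
      refine le_trans ?_ (le_locV hb hsub ⟨(L ++ [x]) ++ (y :: B), ?_, ?_, rfl⟩)
      · have e1 : (L ++ [x]) ++ y :: B = L ++ x :: (y :: B) := by simp
        rw [e1, pairSum_append p f x (y :: B) L, pairSum_cons_cons p f x y B]
        have : (0:ℝ) ≤ dist (f y) (f x) ^ p := Real.rpow_nonneg dist_nonneg p
        linarith
      · refine List.pairwise_append.mpr ⟨hla_sort, hlb_sort, ?_⟩
        intro w hw z hz
        have hwx : w ≤ x := by
          rcases List.mem_append.mp hw with hw1 | hw2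
          · exact le_of_lt (hLx w hw1)
          · simp only [List.mem_singleton] at hw2; exact le_of_eq hw2
        have hyz : y ≤ z := by
          rcases List.mem_cons.mp hz with rfl | hz'
          · exact le_rfl
          · exact le_of_lt (hyB z hz')
        linarith
      · exact hmemc
  have h2 : ∀ a ∈ lSums p f s m, a ≤ locV p f s u - locV p f m u := by
    intro a ha
    rw [le_sub_iff_add_le, add_comm]
    rw [← le_sub_iff_add_le]
    exact csSup_le (lSums_nonempty p f m u) (fun b hbmem => le_sub_iff_add_le.mpr
      (by rw [add_comm]; exact key a ha b hbmem))
  have h3 : locV p f s m ≤ locV p f s u - locV p f m u :=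
    csSup_le (lSums_nonempty p f s m) h2
  linarith

end
end JordanContent2
namespace JordanContent3
open JordanContent JordanContent2
variable {E : Type*} [PseudoMetricSpace E]

/-- Reflection of a path about the midpoint of `[0,1]`. -/
def refl1 (f : ℝ → E) : ℝ → E := fun x => f (1 - x)

lemma refl1_refl1 (f : ℝ → E) : refl1 (refl1 f) = f := by
  funext x; simp [refl1]

lemma lSums_reflect (p : ℝ) (f : ℝ → E) (s t : ℝ) :
    lSums p f s t ⊆ lSums p (refl1 f) (1 - t) (1 - s) := by
  rintro S ⟨l, hsort, hmem, rfl⟩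
  refine ⟨(l.map (fun x => 1 - x)).reverse, ?_, ?_, ?_⟩
  · rw [List.pairwise_reverse, List.pairwise_map]
    exact hsort.imp (fun h => by linarith)
  · intro x hx
    rw [List.mem_reverse, List.mem_map] at hx
    obtain ⟨w, hw, rfl⟩ := hx
    obtain ⟨h1, h2⟩ := hmem w hw
    exact ⟨by linarith, by linarith⟩
  · rw [pairSum_reverse, pairSum_map]
    have : (refl1 f ∘ fun x => 1 - x) = f := by funext x; simp [refl1]
    rw [this]

lemma lSums_reflect_eq (p : ℝ) (f : ℝ → E) (s t : ℝ) :
    lSums p (refl1 f) (1 - t) (1 - s) = lSums p f s t := by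
  refine le_antisymm ?_ (lSums_reflect p f s t)
  have h := lSums_reflect p (refl1 f) (1 - t) (1 - s)
  rw [refl1_refl1] at h
  have e1 : 1 - (1 - s) = s := by ring
  have e2 : 1 - (1 - t) = t := by ring
  rwa [e1, e2] at h

lemma bddAbove_lSums_refl1 {p : ℝ} {f : ℝ → E} (hb : BddAbove (lSums p f 0 1)) :
    BddAbove (lSums p (refl1 f) 0 1) := by
  have := lSums_reflect_eq p f 0 1
  norm_num at this
  rwa [this]

lemma continuousOn_refl1 {f : ℝ → E} (hcont : ContinuousOn f (Set.Icc 0 1)) :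
    ContinuousOn (refl1 f) (Set.Icc 0 1) := by
  apply hcont.comp (by fun_prop : Continuous fun x : ℝ => 1 - x).continuousOn
  intro x hx
  simp only [Set.mem_Icc] at hx ⊢
  constructor <;> [linarith [hx.2]; linarith [hx.1]]

lemma rpow_le_self_of_le_one {p x : ℝ} (hp : 1 ≤ p) (hx : 0 ≤ x) (hx1 : x ≤ 1) :
    x ^ p ≤ x := by
  rcases eq_or_lt_of_le hx with rfl | hx'
  · rw [Real.zero_rpow (by linarith : p ≠ 0)]
  · calc x ^ p ≤ x ^ (1:ℝ) := Real.rpow_le_rpow_of_exponent_ge hx' hx1 hp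
      _ = x := Real.rpow_one x

section
variable {p : ℝ} {f : ℝ → E} (hb : BddAbove (lSums p f 0 1))
  (hcont : ContinuousOn f (Set.Icc 0 1)) (hp : 1 ≤ p)

include hb hcont hp

lemma right_small {t : ℝ} (ht0 : 0 ≤ t) (ht1 : t < 1) {ε : ℝ} (hε : 0 < ε) :
    ∃ s, t < s ∧ s ≤ 1 ∧ locV p f t s ≤ ε := by
  by_contra hcon
  push_neg at hcon
  have h : ∀ s, t < s → s ≤ 1 → ε < locV p f t s := fun s h1 h2 => (hcon s h1 h2)
  set η : ℝ := min 1 (ε / 4) / 2 with hη_def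
  have hηpos : 0 < η := by positivity
  have htmem : t ∈ Set.Icc (0:ℝ) 1 := ⟨ht0, le_of_lt ht1⟩
  obtain ⟨δ, hδpos, hδ⟩ := Metric.continuousWithinAt_iff.mp (hcont t htmem) η hηpos
  set s₁ : ℝ := min 1 (t + δ / 2) with hs₁_def
  have hts₁ : t < s₁ := lt_min ht1 (by linarith)
  have hs₁1 : s₁ ≤ 1 := min_le_left _ _
  have hosc : ∀ v ∈ Set.Icc t s₁, ∀ w ∈ Set.Icc t s₁, dist (f v) (f w) ^ p ≤ ε / 4 := by
    intro v hv w hw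
    have hv01 : v ∈ Set.Icc (0:ℝ) 1 := ⟨le_trans ht0 hv.1, le_trans hv.2 hs₁1⟩
    have hw01 : w ∈ Set.Icc (0:ℝ) 1 := ⟨le_trans ht0 hw.1, le_trans hw.2 hs₁1⟩
    have hdv : dist v t < δ := by
      rw [Real.dist_eq, abs_of_nonneg (by linarith [hv.1])]
      have : s₁ ≤ t + δ / 2 := min_le_right _ _
      linarith [hv.2]
    have hdw : dist w t < δ := by
      rw [Real.dist_eq, abs_of_nonneg (by linarith [hw.1])]
      have : s₁ ≤ t + δ / 2 := min_le_right _ _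
      linarith [hw.2]
    have h1 := hδ hv01 hdv
    have h2 := hδ hw01 hdw
    have hd : dist (f v) (f w) ≤ min 1 (ε / 4) := by
      have := dist_triangle (f v) (f t) (f w)
      rw [dist_comm (f t) (f w)] at this
      have : dist (f v) (f w) ≤ 2 * η := by linarith
      rw [hη_def] at this; linarith
    calc dist (f v) (f w) ^ p ≤ dist (f v) (f w) :=
          rpow_le_self_of_le_one hp dist_nonneg (le_trans hd (min_le_left _ _))
      _ ≤ ε / 4 := le_trans hd (min_le_right _ _)
  have claim : ∀ n : ℕ, ∃ r, t < r ∧ r ≤ s₁ ∧ (n : ℝ) * (ε / 4) ≤ locV p f r s₁ := by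
    intro n
    induction n with
    | zero =>
        exact ⟨s₁, hts₁, le_rfl, by
          simpa using locV_nonneg hb (Set.Icc_subset_Icc (by linarith) hs₁1)⟩
    | succ n ih =>
        obtain ⟨r, htr, hrs₁, hV⟩ := ih
        have hεr : ε < locV p f t r := h r htr (le_trans hrs₁ hs₁1)
        obtain ⟨S, hS, hSε⟩ := exists_lt_of_lt_csSup (lSums_nonempty p f t r) hεr
        obtain ⟨l, hsort, hmem, rfl⟩ := hS
        match l with
        | [] => exact absurd hSε (by simp; linarith)
        | [a] => exact absurd hSε (by simp; linarith)
        | a :: b :: l' =>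
          rw [pairSum_cons_cons] at hSε
          have hamem := hmem a (by simp)
          have hbmem := hmem b (by simp)
          have hab : a < b := (List.pairwise_cons.mp hsort).1 b (by simp)
          have h1 : dist (f b) (f a) ^ p ≤ ε / 4 :=
            hosc b ⟨hbmem.1, le_trans hbmem.2 hrs₁⟩ a ⟨hamem.1, le_trans hamem.2 hrs₁⟩
          have h2 : ε / 2 ≤ pairSum p f (b :: l') := by linarith
          have hsub_br : Set.Icc b r ⊆ Set.Icc (0:ℝ) 1 :=
            Set.Icc_subset_Icc (le_trans ht0 hbmem.1) (le_trans hrs₁ hs₁1)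
          have h3 : ε / 2 ≤ locV p f b r := by
            refine le_trans h2 (le_locV hb hsub_br ⟨b :: l', (List.pairwise_cons.mp hsort).2, ?_, rfl⟩)
            intro x hx
            rcases List.mem_cons.mp hx with rfl | hx'
            · exact ⟨le_rfl, hbmem.2⟩
            · have := (List.pairwise_cons.mp (List.pairwise_cons.mp hsort).2).1 x hx'
              exact ⟨le_of_lt this, (hmem x (by simp [hx'])).2⟩
          refine ⟨b, lt_of_le_of_lt hamem.1 hab, le_trans hbmem.2 hrs₁, ?_⟩
          have hsup : locV p f b r + locV p f r s₁ ≤ locV p f b s₁ :=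
            locV_superadd hb (le_trans ht0 hbmem.1) hbmem.2 hrs₁ hs₁1
          push_cast
          linarith
  obtain ⟨n, hn⟩ := exists_nat_gt (locV p f 0 1 / (ε / 4))
  obtain ⟨r, htr, hrs₁, hV⟩ := claim n
  have hle : locV p f r s₁ ≤ locV p f 0 1 :=
    locV_mono hb (Set.Icc_subset_Icc (by linarith) hs₁1) (le_refl _)
  have hlt : locV p f 0 1 < (n : ℝ) * (ε / 4) := by
    rwa [div_lt_iff₀ (by linarith : (0:ℝ) < ε / 4)] at hn
  linarith

lemma left_small {t : ℝ} (ht0 : 0 < t) (ht1 : t ≤ 1) {ε : ℝ} (hε : 0 < ε) :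
    ∃ s, 0 ≤ s ∧ s < t ∧ locV p f s t ≤ ε := by
  have hb' := bddAbove_lSums_refl1 hb
  have hcont' := continuousOn_refl1 hcont
  obtain ⟨s', hs'1, hs'2, hs'3⟩ := right_small hb' hcont' hp (t := 1 - t)
    (by linarith) (by linarith) hε
  refine ⟨1 - s', by linarith, by linarith, ?_⟩
  have heq : lSums p f (1 - s') t = lSums p (refl1 f) (1 - t) s' := by
    have h := lSums_reflect_eq p f (1 - s') t
    rw [show 1 - (1 - s') = s' by ring] at h
    exact h.symm
  rw [locV, heq]
  exact hs'3

end
end JordanContent3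
namespace JordanContent4
open JordanContent JordanContent2 JordanContent3
variable {E : Type*} [PseudoMetricSpace E]

lemma exists_dist_bound {f : ℝ → E} (hcont : ContinuousOn f (Set.Icc 0 1)) :
    ∃ D : ℝ, 0 ≤ D ∧ ∀ u ∈ Set.Icc (0:ℝ) 1, ∀ v ∈ Set.Icc (0:ℝ) 1,
      dist (f u) (f v) ≤ D := by
  have hK : IsCompact (f '' Set.Icc (0:ℝ) 1) := (isCompact_Icc).image_of_continuousOn hcont
  obtain ⟨C, hC⟩ := hK.isBounded.subset_closedBall (f 0)
  refine ⟨2 * max C 0, by positivity, ?_⟩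
  intro u hu v hv
  have h1 := hC (Set.mem_image_of_mem f hu)
  have h2 := hC (Set.mem_image_of_mem f hv)
  rw [Metric.mem_closedBall] at h1 h2
  calc dist (f u) (f v) ≤ dist (f u) (f 0) + dist (f 0) (f v) := dist_triangle _ _ _
    _ ≤ C + C := by rw [dist_comm (f 0) (f v)]; exact add_le_add h1 h2
    _ ≤ 2 * max C 0 := by
        have := le_max_left C 0
        linarith

lemma rpow_unif {p : ℝ} (hp : 1 ≤ p) (D : ℝ) {ε : ℝ} (hε : 0 < ε) :
    ∃ δ : ℝ, 0 < δ ∧ δ ≤ 1 ∧ ∀ x ∈ Set.Icc 0 (D + 1), ∀ y ∈ Set.Icc 0 (D + 1),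
      |x - y| ≤ δ → |x ^ p - y ^ p| ≤ ε := by
  have hC : Continuous fun x : ℝ => x ^ p := by
    rw [continuous_iff_continuousAt]
    intro x
    exact Real.continuousAt_rpow_const x p (Or.inr (by linarith))
  have hUC := (isCompact_Icc (a := (0:ℝ)) (b := D + 1)).uniformContinuousOn_of_continuous
    hC.continuousOn
  obtain ⟨δ₀, hδ₀, hd⟩ := Metric.uniformContinuousOn_iff.mp hUC ε hε
  refine ⟨min (δ₀ / 2) 1, by positivity, min_le_right _ _, ?_⟩
  intro x hx y hy hxy
  have hlt : dist x y < δ₀ := by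
    rw [Real.dist_eq]
    have := min_le_left (δ₀ / 2) 1
    linarith [le_trans hxy this]
  have := hd x hx y hy hlt
  rw [Real.dist_eq] at this
  exact le_of_lt this

section
variable {p : ℝ} {f : ℝ → E} (hb : BddAbove (lSums p f 0 1)) (hp : 1 ≤ p)

include hb hp

lemma split_est {m u : ℝ} (hm0 : 0 ≤ m) (hmu : m < u) (hu1 : u ≤ 1)
    {D : ℝ} (hD : ∀ a ∈ Set.Icc (0:ℝ) 1, ∀ b ∈ Set.Icc (0:ℝ) 1, dist (f a) (f b) ≤ D)
    {δ ε' : ℝ} (hδ : 0 < δ) (hδ1 : δ ≤ 1)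
    (hosc : ∀ v ∈ Set.Icc m u, dist (f v) (f m) ≤ δ)
    (hup : ∀ x ∈ Set.Icc (0:ℝ) (D + 1), ∀ y ∈ Set.Icc (0:ℝ) (D + 1),
      |x - y| ≤ δ → |x ^ p - y ^ p| ≤ ε')
    (hδε : δ ^ p ≤ ε') :
    locV p f 0 u ≤ locV p f 0 m + locV p f m u + ε' := by
  have hε'0 : 0 ≤ ε' := le_trans (Real.rpow_nonneg hδ.le p) hδε
  have hsub0m : Set.Icc (0:ℝ) m ⊆ Set.Icc (0:ℝ) 1 := Set.Icc_subset_Icc le_rfl (by linarith)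
  have hsubmu : Set.Icc m u ⊆ Set.Icc (0:ℝ) 1 := Set.Icc_subset_Icc hm0 hu1
  have hVm0 : 0 ≤ locV p f 0 m := locV_nonneg hb hsub0m
  have hVmu0 : 0 ≤ locV p f m u := locV_nonneg hb hsubmu
  refine csSup_le (lSums_nonempty p f 0 u) ?_
  rintro S ⟨l, hsort, hmem, rfl⟩
  obtain ⟨l₁, l₂, hsplit, hl₁sort, hl₂sort, hl₁mem, hl₂mem⟩ :
      ∃ l₁ l₂ : List ℝ, l₁ ++ l₂ = l ∧ l₁.Pairwise (· < ·) ∧ l₂.Pairwise (· < ·) ∧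
        (∀ x ∈ l₁, x ∈ Set.Icc 0 m) ∧ (∀ x ∈ l₂, m < x ∧ x ≤ u) := by
    set q : ℝ → Bool := fun x => decide (x ≤ m) with hq
    refine ⟨l.takeWhile q, l.dropWhile q, List.takeWhile_append_dropWhile,
      hsort.sublist (List.takeWhile_sublist q), hsort.sublist (List.dropWhile_sublist q),
      ?_, ?_⟩
    · intro x hx
      have h1 : x ∈ l := (List.takeWhile_sublist q).mem hx
      have h2 : x ≤ m := by simpa [hq] using List.mem_takeWhile_imp hx
      exact ⟨(hmem x h1).1, h2⟩
    · intro x hx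
      have h1 : x ∈ l := (List.dropWhile_sublist q).mem hx
      refine ⟨?_, (hmem x h1).2⟩
      have hne : l.dropWhile q ≠ [] := List.ne_nil_of_mem hx
      have hhead : m < (l.dropWhile q).head hne := by
        have := List.head_dropWhile_not q hne
        simp only [hq, decide_eq_false_iff_not, not_le] at this
        exact this
      rcases (List.cons_head_tail hne).symm ▸ hx with _ | _
      · exact hhead
      · rename_i hx'
        have hs : (l.dropWhile q).Pairwise (· < ·) := hsort.sublist (List.dropWhile_sublist q)
        have := (List.pairwise_cons.mp ((List.cons_head_tail hne) ▸ hs)).1 x hx'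
        exact lt_trans hhead this
  rw [← hsplit]
  rcases List.eq_nil_or_concat l₁ with rfl | ⟨L, a, rfl⟩
  · -- no points left of m
    simp only [List.nil_append]
    rcases l₂ with _ | ⟨c, B⟩
    · simpa using by linarith
    · have : pairSum p f (c :: B) ≤ locV p f m u := by
        refine le_locV hb hsubmu ⟨c :: B, hl₂sort, ?_, rfl⟩
        intro x hx
        exact ⟨(hl₂mem x hx).1.le, (hl₂mem x hx).2⟩
      linarith
  rcases l₂ with _ | ⟨c, B⟩
  · -- no points right of m
    simp only [List.append_nil]
    have : pairSum p f (L.concat a) ≤ locV p f 0 m :=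
      le_locV hb hsub0m ⟨L.concat a, hl₁sort, hl₁mem, rfl⟩
    linarith
  -- both sides nonempty
  rw [List.concat_eq_append] at hl₁sort hl₁mem ⊢
  have hdecomp : pairSum p f ((L ++ [a]) ++ c :: B)
      = pairSum p f (L ++ [a]) + dist (f c) (f a) ^ p + pairSum p f (c :: B) := by
    have e1 : (L ++ [a]) ++ c :: B = L ++ a :: (c :: B) := by simp
    rw [e1, pairSum_append p f a (c :: B) L, pairSum_cons_cons p f a c B]
    ring
  have ham : a ∈ Set.Icc 0 m := hl₁mem a (by simp)
  have hcB : ∀ x ∈ c :: B, x ∈ Set.Icc m u := fun x hx => ⟨(hl₂mem x hx).1.le, (hl₂mem x hx).2⟩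
  have h_l₂sum : pairSum p f (c :: B) ≤ locV p f m u :=
    le_locV hb hsubmu ⟨c :: B, hl₂sort, hcB, rfl⟩
  set x := dist (f a) (f m) with hxdef
  have hxD : x ≤ D := hD a (hsub0m ham) m ⟨hm0, by linarith⟩
  have hx0 : 0 ≤ x := dist_nonneg
  have hca : dist (f c) (f a) ≤ x + δ := by
    have t1 := dist_triangle (f c) (f m) (f a)
    have t2 := hosc c (hcB c (by simp))
    have t3 : dist (f m) (f a) = x := dist_comm (f m) (f a)
    linarith
  have hd1 : dist (f c) (f a) ^ p ≤ (x + δ) ^ p :=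
    Real.rpow_le_rpow dist_nonneg hca (by linarith)
  have hd2 : (x + δ) ^ p ≤ x ^ p + ε' := by
    have := hup x ⟨hx0, by linarith⟩ (x + δ) ⟨by positivity, by linarith⟩
      (by rw [abs_of_nonpos (by linarith)]; linarith)
    have habs := abs_le.mp this
    linarith [habs.1]
  rcases eq_or_lt_of_le ham.2 with ha_eq | ha_lt
  · -- a = m
    have hxz : x = 0 := by rw [hxdef, ha_eq, dist_self]
    have hl₁le : pairSum p f (L ++ [a]) ≤ locV p f 0 m :=
      le_locV hb hsub0m ⟨L ++ [a], hl₁sort, hl₁mem, rfl⟩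
    have : dist (f c) (f a) ^ p ≤ ε' := by
      rw [hxz, zero_add] at hd1 hd2
      linarith
    linarith [hdecomp, h_l₂sum]
  · -- a < m : extend left list by m
    have hkey : pairSum p f (L ++ [a]) + x ^ p = pairSum p f (L ++ a :: [m]) := by
      rw [pairSum_append p f a [m] L, pairSum_cons_cons p f a m, pairSum_single]
      rw [dist_comm (f m) (f a)]
      ring
    have hLa : ∀ w ∈ L, w < a := by
      intro w hw
      exact (List.pairwise_append.mp hl₁sort).2.2 w hw a (by simp)
    have hl₁m_mem : ∀ w ∈ L ++ a :: [m], w ∈ Set.Icc 0 m := by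
      intro w hw
      rcases List.mem_append.mp hw with hw1 | hw2
      · exact hl₁mem w (by simp [hw1])
      · rcases List.mem_cons.mp hw2 with rfl | hw3
        · exact ham
        · simp only [List.mem_singleton] at hw3
          subst hw3
          exact ⟨hm0, le_rfl⟩
    have hl₁m_sort : (L ++ a :: [m]).Pairwise (· < ·) := by
      refine List.pairwise_append.mpr ⟨(List.pairwise_append.mp hl₁sort).1, ?_, ?_⟩
      · simp [ha_lt]
      · intro w hw z hz
        rcases List.mem_cons.mp hz with rfl | hz'
        · exact hLa w hw
        · simp only [List.mem_singleton] at hz'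
          subst hz'
          exact lt_trans (hLa w hw) ha_lt
    have hle : pairSum p f (L ++ a :: [m]) ≤ locV p f 0 m :=
      le_locV hb hsub0m ⟨L ++ a :: [m], hl₁m_sort, hl₁m_mem, rfl⟩
    linarith [hdecomp, h_l₂sum]

end
end JordanContent4
namespace JordanContent5
open JordanContent JordanContent2 JordanContent3 JordanContent4
variable {E : Type*} [MetricSpace E]

section
variable {p : ℝ} {f : ℝ → E} (hb : BddAbove (lSums p f 0 1))

include hb

lemma W_zero : locV p f 0 0 = 0 := by
  refine le_antisymm ?_ (locV_nonneg hb (by simp [Set.Icc_subset_Icc_right]))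
  refine csSup_le (lSums_nonempty p f 0 0) ?_
  rintro S ⟨l, hsort, hmem, rfl⟩
  match l with
  | [] => simp
  | [a] => simp
  | a :: b :: l' =>
    have ha : a = 0 := le_antisymm (hmem a (by simp)).2 (hmem a (by simp)).1
    have hbv : b = 0 := le_antisymm (hmem b (by simp)).2 (hmem b (by simp)).1
    have : a < b := (List.pairwise_cons.mp hsort).1 b (by simp)
    rw [ha, hbv] at this
    exact absurd this (lt_irrefl 0)

lemma W_superadd_pair {a b : ℝ} (h0 : 0 ≤ a) (hab : a < b) (hb1 : b ≤ 1) :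
    locV p f 0 a + dist (f b) (f a) ^ p ≤ locV p f 0 b := by
  have h1 : dist (f b) (f a) ^ p ≤ locV p f a b :=
    dist_rpow_le_locV hb (Set.Icc_subset_Icc h0 hb1) le_rfl hab le_rfl
  have h2 := locV_superadd hb (le_refl (0:ℝ)) h0 hab.le hb1
  linarith

lemma W_strict (hinj : Set.InjOn f (Set.Ico 0 1)) {a b : ℝ}
    (h0 : 0 ≤ a) (hab : a < b) (hb1 : b ≤ 1) :
    locV p f 0 a < locV p f 0 b := by
  rcases lt_or_ge b 1 with hblt | hbge
  · have hne : f a ≠ f b := by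
      intro h
      exact absurd (hinj (Set.mem_Ico.mpr ⟨h0, lt_trans hab hblt⟩)
        (Set.mem_Ico.mpr ⟨le_trans h0 hab.le, hblt⟩) h) (ne_of_lt hab)
    have hpos : 0 < dist (f b) (f a) ^ p :=
      Real.rpow_pos_of_pos (dist_pos.mpr (Ne.symm hne)) p
    linarith [W_superadd_pair hb h0 hab hb1]
  · have hb1' : b = 1 := le_antisymm hb1 hbge
    set y := (a + 1) / 2 with hy
    have hay : a < y := by rw [hy]; linarith [lt_of_lt_of_le hab hb1]
    have hy1 : y < 1 := by rw [hy]; linarith [lt_of_lt_of_le hab hb1]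
    have hne : f a ≠ f y := by
      intro h
      exact absurd (hinj (Set.mem_Ico.mpr ⟨h0, lt_trans hay hy1⟩)
        (Set.mem_Ico.mpr ⟨le_trans h0 hay.le, hy1⟩) h) (ne_of_lt hay)
    have hpos : 0 < dist (f y) (f a) ^ p :=
      Real.rpow_pos_of_pos (dist_pos.mpr (Ne.symm hne)) p
    have h1 : dist (f y) (f a) ^ p ≤ locV p f a b := by
      refine dist_rpow_le_locV hb (Set.Icc_subset_Icc h0 hb1) le_rfl hay ?_
      rw [hb1']; exact hy1.le
    have h2 := locV_superadd hb (le_refl (0:ℝ)) h0 hab.le hb1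
    have h3 : 0 ≤ locV p f 0 a := locV_nonneg hb (Set.Icc_subset_Icc le_rfl (by linarith))
    linarith

variable (hcont : ContinuousOn f (Set.Icc 0 1)) (hp : 1 ≤ p)

include hcont hp

lemma W_contOn : ContinuousOn (fun t => locV p f 0 t) (Set.Icc 0 1) := by
  obtain ⟨D, hD0, hD⟩ := exists_dist_bound hcont
  intro t ht
  rw [Metric.continuousWithinAt_iff]
  intro ε hε
  obtain ⟨δ₁, hδ₁pos, hδ₁le1, hup₁⟩ := rpow_unif hp D (ε := ε / 4) (by linarith)
  set δc : ℝ := min δ₁ (min 1 (ε / 4)) with hδc_def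
  have hδc_pos : 0 < δc := by positivity
  have hδc_le1 : δc ≤ 1 := le_trans (min_le_right _ _) (min_le_left _ _)
  have hδc_leδ₁ : δc ≤ δ₁ := min_le_left _ _
  have hδc_leε : δc ≤ ε / 4 := le_trans (min_le_right _ _) (min_le_right _ _)
  have hup : ∀ x ∈ Set.Icc (0:ℝ) (D + 1), ∀ y ∈ Set.Icc (0:ℝ) (D + 1),
      |x - y| ≤ δc → |x ^ p - y ^ p| ≤ ε / 4 :=
    fun x hx y hy hxy => hup₁ x hx y hy (le_trans hxy hδc_leδ₁)
  have hδcp : δc ^ p ≤ ε / 4 :=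
    le_trans (rpow_le_self_of_le_one hp hδc_pos.le hδc_le1) hδc_leε
  obtain ⟨δ₂, hδ₂pos, hδ₂⟩ := Metric.continuousWithinAt_iff.mp (hcont t ht) (δc / 2)
    (by positivity)
  have hR : ∃ δR > 0, ∀ s ∈ Set.Icc (0:ℝ) 1, t ≤ s → s - t < δR →
      locV p f 0 s - locV p f 0 t ≤ ε / 2 := by
    rcases lt_or_ge t 1 with ht1 | ht1
    · obtain ⟨sR, htsR, hsR1, hVsR⟩ := right_small hb hcont hp ht.1 ht1 (ε := ε / 4)
        (by linarith)
      refine ⟨min (sR - t) δ₂, lt_min (by linarith) hδ₂pos, ?_⟩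
      intro s hs hts hst
      rcases eq_or_lt_of_le hts with rfl | htslt
      · simp only [sub_self]; linarith
      have hssR : s ≤ sR := by
        have := lt_of_lt_of_le hst (min_le_left _ _)
        linarith
      have hstδ₂ : s - t < δ₂ := lt_of_lt_of_le hst (min_le_right _ _)
      have hosc : ∀ v ∈ Set.Icc t s, dist (f v) (f t) ≤ δc := by
        intro v hv
        have hv01 : v ∈ Set.Icc (0:ℝ) 1 := ⟨le_trans ht.1 hv.1, le_trans hv.2 hs.2⟩
        have : dist v t < δ₂ := by
          rw [Real.dist_eq, abs_of_nonneg (by linarith [hv.1])]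
          linarith [hv.2]
        linarith [hδ₂ hv01 this]
      have hsplit := split_est hb hp ht.1 htslt hs.2 hD hδc_pos hδc_le1 hosc hup hδcp
      have hmono : locV p f t s ≤ locV p f t sR :=
        locV_mono hb (Set.Icc_subset_Icc le_rfl hssR) (Set.Icc_subset_Icc ht.1 hsR1)
      linarith
    · refine ⟨1, one_pos, ?_⟩
      intro s hs hts _
      have : s = t := le_antisymm (le_trans hs.2 ht1) hts
      rw [this]; simp only [sub_self]; linarith
  have hL : ∃ δL > 0, ∀ s ∈ Set.Icc (0:ℝ) 1, s ≤ t → t - s < δL →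
      locV p f 0 t - locV p f 0 s ≤ ε / 2 := by
    rcases lt_or_ge 0 t with ht0 | ht0
    · obtain ⟨sL, hsL0, hsLt, hVsL⟩ := left_small hb hcont hp ht0 ht.2 (ε := ε / 4)
        (by linarith)
      refine ⟨min (t - sL) δ₂, lt_min (by linarith) hδ₂pos, ?_⟩
      intro s hs hst hts
      rcases eq_or_lt_of_le hst with rfl | hstlt
      · simp only [sub_self]; linarith
      have hsLs : sL ≤ s := by
        have := lt_of_lt_of_le hts (min_le_left _ _)
        linarith
      have htsδ₂ : t - s < δ₂ := lt_of_lt_of_le hts (min_le_right _ _)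
      have hosc : ∀ v ∈ Set.Icc s t, dist (f v) (f s) ≤ δc := by
        intro v hv
        have hv01 : v ∈ Set.Icc (0:ℝ) 1 := ⟨le_trans hs.1 hv.1, le_trans hv.2 ht.2⟩
        have h1 : dist v t < δ₂ := by
          rw [Real.dist_eq, abs_of_nonpos (by linarith [hv.2])]
          linarith [hv.1]
        have h2 : dist s t < δ₂ := by
          rw [Real.dist_eq, abs_of_nonpos (by linarith)]
          linarith
        have := hδ₂ hv01 h1
        have := hδ₂ hs h2
        have htri := dist_triangle (f v) (f t) (f s)
        rw [dist_comm (f t) (f s)] at htri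
        linarith
      have hsplit := split_est hb hp hs.1 hstlt ht.2 hD hδc_pos hδc_le1 hosc hup hδcp
      have hmono : locV p f s t ≤ locV p f sL t :=
        locV_mono hb (Set.Icc_subset_Icc hsLs le_rfl) (Set.Icc_subset_Icc hsL0 ht.2)
      linarith
    · refine ⟨1, one_pos, ?_⟩
      intro s hs hst _
      have : s = t := le_antisymm hst (le_trans ht0 hs.1)
      rw [this]; simp only [sub_self]; linarith
  obtain ⟨δR, hδRpos, hR⟩ := hR
  obtain ⟨δL, hδLpos, hL⟩ := hL
  refine ⟨min δR δL, by positivity, ?_⟩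
  intro y hy hyt
  rw [Real.dist_eq]
  rcases le_total y t with hyt' | hyt'
  · have h1 : t - y < δL := by
      rw [Real.dist_eq, abs_of_nonpos (by linarith)] at hyt
      linarith [lt_of_lt_of_le hyt (min_le_right δR δL)]
    have h2 := hL y hy hyt' h1
    have h3 : locV p f 0 y ≤ locV p f 0 t :=
      locV_mono hb (Set.Icc_subset_Icc le_rfl hyt') (Set.Icc_subset_Icc le_rfl ht.2)
    rw [abs_of_nonpos (by linarith)]
    linarith
  · have h1 : y - t < δR := by
      rw [Real.dist_eq, abs_of_nonneg (by linarith)] at hyt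
      linarith [lt_of_lt_of_le hyt (min_le_left δR δL)]
    have h2 := hR y hy hyt' h1
    have h3 : locV p f 0 t ≤ locV p f 0 y :=
      locV_mono hb (Set.Icc_subset_Icc le_rfl hyt') (Set.Icc_subset_Icc le_rfl hy.2)
    rw [abs_of_nonneg (by linarith)]
    linarith

end
end JordanContent5
namespace JordanContent6
open JordanContent JordanContent2 JordanContent3 JordanContent4 JordanContent5
variable {E : Type*} [MetricSpace E]

theorem exists_holder_param {p : ℝ} (hp : 1 ≤ p) {f : ℝ → E}
    (hcont : ContinuousOn f (Set.Icc 0 1)) (hend : f 0 = f 1)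
    (hinj : Set.InjOn f (Set.Ico 0 1)) (hb : BddAbove (lSums p f 0 1)) :
    ∃ C : ℝ, 0 ≤ C ∧ ∃ φ : ℝ → E, ContinuousOn φ (Set.Icc 0 1) ∧
      φ '' Set.Icc 0 1 = f '' Set.Icc 0 1 ∧ φ 0 = φ 1 ∧ Set.InjOn φ (Set.Ico 0 1) ∧
      ∀ x ∈ Set.Icc (0:ℝ) 1, ∀ y ∈ Set.Icc (0:ℝ) 1,
        dist (φ x) (φ y) ≤ (locV p f 0 1) ^ (1 / p) * |x - y| ^ (1 / p) := by
  set W : ℝ → ℝ := fun t => locV p f 0 t with hW_def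
  have hW0 : W 0 = 0 := W_zero hb
  have hWmono : ∀ {s t : ℝ}, 0 ≤ s → s ≤ t → t ≤ 1 → W s ≤ W t := by
    intro s t h0 hst ht1
    exact locV_mono hb (Set.Icc_subset_Icc le_rfl hst) (Set.Icc_subset_Icc le_rfl ht1)
  have hWnonneg : ∀ {t : ℝ}, 0 ≤ t → t ≤ 1 → 0 ≤ W t := by
    intro t h0 h1
    exact locV_nonneg hb (Set.Icc_subset_Icc le_rfl h1)
  set L : ℝ := W 1 with hL_def
  have hLpos : 0 < L := by
    have hWs : W 0 < W 1 := W_strict hb hinj (le_refl (0:ℝ)) one_pos (le_refl (1:ℝ))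
    rw [hW0] at hWs
    exact hWs
  set Wb : ℝ → ℝ := fun t => if t < 0 then t else if t ≤ 1 then W t else L + (t - 1)
    with hWb_def
  have hWb_eq : ∀ t, 0 ≤ t → t ≤ 1 → Wb t = W t := by
    intro t h0 h1
    simp only [hWb_def, if_neg (not_lt.mpr h0), if_pos h1]
  have hWbmono : StrictMono Wb := by
    intro s t hst
    rcases lt_or_ge t 0 with ht0 | ht0
    · simp only [hWb_def, if_pos ht0, if_pos (lt_trans hst ht0)]
      exact hst
    rcases lt_or_ge s 0 with hs0 | hs0
    · rcases le_or_gt t 1 with ht1 | ht1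
      · simp only [hWb_def, if_pos hs0, if_neg (not_lt.mpr ht0), if_pos ht1]
        exact lt_of_lt_of_le hs0 (hWnonneg ht0 ht1)
      · simp only [hWb_def, if_pos hs0, if_neg (not_lt.mpr ht0), if_neg (not_le.mpr ht1)]
        linarith
    rcases le_or_gt t 1 with ht1 | ht1
    · simp only [hWb_def, if_neg (not_lt.mpr hs0), if_neg (not_lt.mpr ht0),
        if_pos ht1, if_pos (le_trans hst.le ht1)]
      exact W_strict hb hinj hs0 hst ht1
    rcases le_or_gt s 1 with hs1 | hs1
    · simp only [hWb_def, if_neg (not_lt.mpr hs0), if_neg (not_lt.mpr ht0),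
        if_pos hs1, if_neg (not_le.mpr ht1)]
      have : W s ≤ L := hWmono hs0 hs1 le_rfl
      linarith
    · simp only [hWb_def, if_neg (not_lt.mpr hs0), if_neg (not_lt.mpr ht0),
        if_neg (not_le.mpr hs1), if_neg (not_le.mpr ht1)]
      linarith
  have hWbsurj : Function.Surjective Wb := by
    intro c
    rcases lt_or_ge c 0 with hc0 | hc0
    · exact ⟨c, by simp only [hWb_def, if_pos hc0]⟩
    rcases le_or_gt c L with hcL | hcL
    · have hsub := intermediate_value_Icc (zero_le_one (α := ℝ)) (W_contOn hb hcont hp)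
      have hc : c ∈ Set.Icc (W 0) (W 1) := by rw [hW0]; exact ⟨hc0, hcL⟩
      obtain ⟨t, ht, htc⟩ := hsub hc
      exact ⟨t, by rw [hWb_eq t ht.1 ht.2]; exact htc⟩
    · refine ⟨c - L + 1, ?_⟩
      have h1 : ¬(c - L + 1 < 0) := by push_neg; linarith
      have h2 : ¬(c - L + 1 ≤ 1) := by push_neg; linarith
      simp only [hWb_def, if_neg h1, if_neg h2]
      ring
  set e : ℝ ≃o ℝ := StrictMono.orderIsoOfSurjective Wb hWbmono hWbsurj with he_def
  set τ : ℝ → ℝ := fun c => e.symm c with hτ_def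
  have hτcont : Continuous τ := OrderIso.continuous e.symm
  have he_app : ∀ t, e t = Wb t := fun t => rfl
  have hτW : ∀ t, τ (Wb t) = t := by
    intro t
    rw [hτ_def, ← he_app]
    exact e.symm_apply_apply t
  have hWτ : ∀ c, Wb (τ c) = c := by
    intro c
    rw [← he_app]
    exact e.apply_symm_apply c
  have hτmono : StrictMono τ := fun a b hab => e.symm.strictMono hab
  have hτ0 : τ 0 = 0 := by
    have h : Wb 0 = 0 := by rw [hWb_eq 0 le_rfl zero_le_one, hW0]
    calc τ 0 = τ (Wb 0) := by rw [h]
      _ = 0 := hτW 0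
  have hτL : τ L = 1 := by
    have h : Wb 1 = L := by rw [hWb_eq 1 zero_le_one le_rfl]
    calc τ L = τ (Wb 1) := by rw [h]
      _ = 1 := hτW 1
  have hτmem : ∀ u ∈ Set.Icc (0:ℝ) 1, τ (L * u) ∈ Set.Icc (0:ℝ) 1 := by
    intro u hu
    constructor
    · rw [← hτ0]; exact (hτmono.le_iff_le).mpr (by nlinarith [hu.1])
    · rw [← hτL]; exact (hτmono.le_iff_le).mpr (by nlinarith [hu.2, hLpos])
  have hWτL : ∀ u ∈ Set.Icc (0:ℝ) 1, W (τ (L * u)) = L * u := by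
    intro u hu
    have hm := hτmem u hu
    rw [← hWb_eq _ hm.1 hm.2]
    exact hWτ (L * u)
  set φ : ℝ → E := fun u => f (τ (L * u)) with hφ_def
  have hCnonneg : (0:ℝ) ≤ L ^ (1 / p) := Real.rpow_nonneg hLpos.le _
  refine ⟨L ^ (1 / p), hCnonneg, φ, ?_, ?_, ?_, ?_, ?_⟩
  · -- continuity
    refine hcont.comp ((hτcont.comp (continuous_const.mul continuous_id)).continuousOn) ?_
    intro u hu
    exact hτmem u hu
  · -- image
    apply Set.Subset.antisymm
    · rintro y ⟨u, hu, rfl⟩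
      exact Set.mem_image_of_mem f (hτmem u hu)
    · rintro y ⟨t, ht, rfl⟩
      have hWt : W t ∈ Set.Icc 0 L := ⟨hWnonneg ht.1 ht.2, hWmono ht.1 ht.2 le_rfl⟩
      refine ⟨W t / L, ⟨div_nonneg hWt.1 hLpos.le, ?_⟩, ?_⟩
      · rw [div_le_one hLpos]; exact hWt.2
      · have : L * (W t / L) = W t := by field_simp
        rw [hφ_def]
        simp only []
        rw [this, ← hWb_eq t ht.1 ht.2, hτW]
  · -- endpoints
    have h1 : τ (L * 0) = 0 := by rw [mul_zero, hτ0]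
    have h2 : τ (L * 1) = 1 := by rw [mul_one, hτL]
    simp only [hφ_def, h1, h2, hend]
  · -- injectivity
    intro x hx y hy hxy
    have hax : τ (L * x) ∈ Set.Ico (0:ℝ) 1 := by
      refine ⟨(hτmem x ⟨hx.1, hx.2.le⟩).1, ?_⟩
      rw [← hτL]
      exact hτmono (by nlinarith [hx.2, hLpos])
    have hay : τ (L * y) ∈ Set.Ico (0:ℝ) 1 := by
      refine ⟨(hτmem y ⟨hy.1, hy.2.le⟩).1, ?_⟩
      rw [← hτL]
      exact hτmono (by nlinarith [hy.2, hLpos])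
    have h1 : τ (L * x) = τ (L * y) := hinj hax hay hxy
    have h2 : L * x = L * y := hτmono.injective h1
    exact mul_left_cancel₀ (ne_of_gt hLpos) h2
  · -- Hölder estimate
    have key : ∀ x ∈ Set.Icc (0:ℝ) 1, ∀ y ∈ Set.Icc (0:ℝ) 1, x ≤ y →
        dist (φ x) (φ y) ≤ L ^ (1 / p) * |x - y| ^ (1 / p) := by
      intro x hx y hy hxy
      have hamem := hτmem x hx
      have hbmem := hτmem y hy
      have hab : τ (L * x) ≤ τ (L * y) := hτmono.le_iff_le.mpr (by nlinarith [hLpos])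
      rcases eq_or_lt_of_le hab with heq | hlt
      · have hφeq : φ x = φ y := by rw [hφ_def]; simp only []; rw [heq]
        rw [hφeq, dist_self]
        positivity
      · have hsup : W (τ (L * x)) + dist (f (τ (L * y))) (f (τ (L * x))) ^ p
            ≤ W (τ (L * y)) := W_superadd_pair hb hamem.1 hlt hbmem.2
        have hWa : W (τ (L * x)) = L * x := hWτL x hx
        have hWb2 : W (τ (L * y)) = L * y := hWτL y hy
        rw [hWa, hWb2] at hsup
        have hdp : dist (f (τ (L * y))) (f (τ (L * x))) ^ p ≤ L * (y - x) := by nlinarith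
        have hd0 : (0:ℝ) ≤ dist (f (τ (L * y))) (f (τ (L * x))) := dist_nonneg
        have hpne : p ≠ 0 := by linarith
        have hid : (dist (f (τ (L * y))) (f (τ (L * x))) ^ p) ^ (1 / p)
            = dist (f (τ (L * y))) (f (τ (L * x))) := by
          rw [← Real.rpow_mul hd0, mul_one_div, div_self hpne, Real.rpow_one]
        have hmono2 : (dist (f (τ (L * y))) (f (τ (L * x))) ^ p) ^ (1 / p)
            ≤ (L * (y - x)) ^ (1 / p) :=
          Real.rpow_le_rpow (Real.rpow_nonneg hd0 p) hdp (by positivity)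
        rw [hid] at hmono2
        have hsplit : (L * (y - x)) ^ (1 / p) = L ^ (1 / p) * (y - x) ^ (1 / p) :=
          Real.mul_rpow hLpos.le (by linarith)
        have habs : |x - y| = y - x := by
          rw [abs_sub_comm, abs_of_nonneg (by linarith)]
        rw [hφ_def]
        simp only []
        rw [dist_comm (f (τ (L * x))) (f (τ (L * y))), habs]
        rw [hsplit] at hmono2
        exact hmono2
    intro x hx y hy
    rcases le_total x y with h | h
    · exact key x hx y hy h
    · rw [dist_comm, abs_sub_comm]
      exact key y hy x hx h
end JordanContent6
namespace JordanContent
variable {E : Type*} [PseudoMetricSpace E]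

lemma pairSum_ofFn (p : ℝ) (f : ℝ → E) : ∀ (n : ℕ) (t : Fin (n + 1) → ℝ),
    pairSum p f (List.ofFn t) = ∑ i : Fin n, dist (f (t i.succ)) (f (t i.castSucc)) ^ p := by
  intro n
  induction n with
  | zero => intro t; simp
  | succ n ih =>
    intro t
    have h1 : List.ofFn t = t 0 :: List.ofFn (fun i : Fin (n + 1) => t i.succ) :=
      List.ofFn_succ
    have h2 : List.ofFn (fun i : Fin (n + 1) => t i.succ)
        = t (0 : Fin (n + 1)).succ :: List.ofFn (fun i : Fin n => t i.succ.succ) :=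
      List.ofFn_succ
    rw [h1, h2, pairSum_cons_cons, ← h2, ih (fun i => t i.succ), Fin.sum_univ_succ]
    simp only [Fin.castSucc_zero, Fin.succ_castSucc]
end JordanContent
section MainAssembly
open JordanContent JordanContent2 JordanContent3 JordanContent4 JordanContent5 JordanContent6

local notation "E2" => EuclideanSpace ℝ (Fin 2)

lemma lSums_subset_pContent (p : ℝ) (ψ : ℝ → E2) :
    lSums p ψ 0 1 ⊆ pContentSums p ψ := by
  rintro S ⟨l, hsort, hmem, rfl⟩
  cases l with
  | nil =>
      refine ⟨0, fun _ => 0, ?_, ?_, ?_⟩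
      · intro i j hij
        have h1 : i.1 < 1 := i.isLt
        have h2 : j.1 < 1 := j.isLt
        have hij2 : i = j := Fin.ext (by omega)
        exact absurd hij2 (ne_of_lt hij)
      · intro i; exact ⟨le_rfl, zero_le_one⟩
      · simp
  | cons a l' =>
      refine ⟨l'.length, (a :: l').get, (List.sortedLT_iff_pairwise.mpr hsort).strictMono_get, ?_, ?_⟩
      · intro i; exact hmem _ (List.get_mem (a :: l') i)
      · have h := pairSum_ofFn p ψ l'.length ((a :: l').get)
        rw [List.ofFn_get] at h
        exact h

lemma pContent_bound {α : ℝ} (hα0 : 0 < α) (hα1 : α < 1) {C : ℝ} (hC : 0 ≤ C)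
    {φ : ℝ → E2}
    (hH : ∀ x ∈ Set.Icc (0:ℝ) 1, ∀ y ∈ Set.Icc (0:ℝ) 1,
      dist (φ x) (φ y) ≤ C * |x - y| ^ α) :
    ∀ S ∈ pContentSums (1 / α) φ, S ≤ C ^ (1 / α) := by
  rintro S ⟨n, t, hmono, hmem, rfl⟩
  have hp0 : (0:ℝ) ≤ 1 / α := by positivity
  have hterm : ∀ i : Fin n, dist (φ (t i.succ)) (φ (t i.castSucc)) ^ (1 / α)
      ≤ C ^ (1 / α) * (t i.succ - t i.castSucc) := by
    intro i
    have hlt : t i.castSucc < t i.succ := hmono (Fin.castSucc_lt_succ (i := i))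
    have hd := hH (t i.succ) (hmem _) (t i.castSucc) (hmem _)
    rw [abs_of_nonneg (by linarith)] at hd
    have h1 : dist (φ (t i.succ)) (φ (t i.castSucc)) ^ (1 / α)
        ≤ (C * (t i.succ - t i.castSucc) ^ α) ^ (1 / α) :=
      Real.rpow_le_rpow dist_nonneg hd hp0
    have h2 : (C * (t i.succ - t i.castSucc) ^ α) ^ (1 / α)
        = C ^ (1 / α) * ((t i.succ - t i.castSucc) ^ α) ^ (1 / α) :=
      Real.mul_rpow hC (Real.rpow_nonneg (by linarith) α)
    have h3 : ((t i.succ - t i.castSucc) ^ α) ^ (1 / α) = t i.succ - t i.castSucc := by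
      rw [← Real.rpow_mul (by linarith : (0:ℝ) ≤ t i.succ - t i.castSucc),
        mul_one_div, div_self (ne_of_gt hα0), Real.rpow_one]
    rw [h2, h3] at h1
    exact h1
  have hsum := Finset.sum_le_sum (fun i (_ : i ∈ Finset.univ) => hterm i)
  set T : ℕ → ℝ := fun k => t ⟨min k n, by omega⟩ with hT_def
  have htel : ∑ i : Fin n, (t i.succ - t i.castSucc) = T n - T 0 := by
    have hterm2 : ∀ i : Fin n, t i.succ - t i.castSucc = T (↑i + 1) - T ↑i := by
      intro i
      have e1 : T (↑i + 1) = t i.succ := by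
        have hfe : (⟨(↑i + 1) ⊓ n, by omega⟩ : Fin (n + 1)) = i.succ := by
          apply Fin.ext
          simp only [Fin.val_succ]
          omega
        rw [hT_def]
        exact congrArg t hfe
      have e2 : T ↑i = t i.castSucc := by
        have hfe : (⟨↑i ⊓ n, by omega⟩ : Fin (n + 1)) = i.castSucc := by
          apply Fin.ext
          simp only [Fin.coe_castSucc]
          omega
        rw [hT_def]
        exact congrArg t hfe
      rw [e1, e2]
    calc ∑ i : Fin n, (t i.succ - t i.castSucc)
        = ∑ i : Fin n, (T (↑i + 1) - T ↑i) := Finset.sum_congr rfl fun i _ => hterm2 i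
      _ = ∑ k ∈ Finset.range n, (T (k + 1) - T k) :=
          Fin.sum_univ_eq_sum_range (fun k => T (k + 1) - T k) n
      _ = T n - T 0 := Finset.sum_range_sub T n
  have hsum2 : ∑ i : Fin n, C ^ (1 / α) * (t i.succ - t i.castSucc)
      = C ^ (1 / α) * (T n - T 0) := by
    rw [← Finset.mul_sum, htel]
  have hT0 : 0 ≤ T 0 := (hmem _).1
  have hTn : T n ≤ 1 := (hmem _).2
  have hCp : (0:ℝ) ≤ C ^ (1 / α) := Real.rpow_nonneg hC _
  calc ∑ i : Fin n, dist (φ (t i.succ)) (φ (t i.castSucc)) ^ (1 / α)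
      ≤ ∑ i : Fin n, C ^ (1 / α) * (t i.succ - t i.castSucc) := hsum
    _ = C ^ (1 / α) * (T n - T 0) := hsum2
    _ ≤ C ^ (1 / α) * 1 := by nlinarith
    _ = C ^ (1 / α) := mul_one _

theorem holder_param_iff_finite_content' (α : ℝ) (hα : α ∈ Set.Ioo (0:ℝ) 1)
    (Γ : Set E2) :
    (∃ C : ℝ, 0 ≤ C ∧ ∃ φ : ℝ → E2, IsLoopParam φ 1 Γ ∧
      ∀ x ∈ Set.Icc (0:ℝ) 1, ∀ y ∈ Set.Icc (0:ℝ) 1,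
        dist (φ x) (φ y) ≤ C * |x - y| ^ α) ↔
    (∃ ψ : ℝ → E2, IsLoopParam ψ 1 Γ ∧
      BddAbove (pContentSums (1 / α) ψ)) := by
  obtain ⟨hα0, hα1⟩ := hα
  constructor
  · rintro ⟨C, hC, φ, hLoop, hH⟩
    exact ⟨φ, hLoop, ⟨C ^ (1 / α), fun S hS => pContent_bound hα0 hα1 hC hH S hS⟩⟩
  · rintro ⟨ψ, hLoop, hbdd⟩
    have hhl : ContinuousOn ψ (Set.Icc 0 1) ∧ ψ '' Set.Icc 0 1 = Γ ∧ ψ 0 = ψ 1 ∧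
        Set.InjOn ψ (Set.Ico 0 1) := hLoop
    obtain ⟨hcont, himg, hend, hinj⟩ := hhl
    have hb : BddAbove (lSums (1 / α) ψ 0 1) :=
      hbdd.mono (lSums_subset_pContent (1 / α) ψ)
    have hp : (1:ℝ) ≤ 1 / α := by
      rw [le_div_iff₀ hα0]
      linarith
    obtain ⟨C, hC, φ, h1, h2, h3, h4, h5⟩ := exists_holder_param hp hcont hend hinj hb
    refine ⟨locV (1 / α) ψ 0 1 ^ α, ?_, φ, ?_, ?_⟩
    · exact Real.rpow_nonneg (locV_nonneg hb (le_refl _)) α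
    · exact ⟨h1, by rw [h2]; exact himg, h3, h4⟩
    · intro x hx y hy
      have := h5 x hx y hy
      rwa [one_div_one_div] at this

end MainAssembly

/-- A Jordan curve admits an `α`-Hölder loop parametrization on `[0,1]`
iff it has finite `(1/α)`-content. -/
theorem holder_param_iff_finite_content (α : ℝ) (hα : α ∈ Set.Ioo (0:ℝ) 1)
    (Γ : Set (EuclideanSpace ℝ (Fin 2)))
    (hJordan : ∃ g : EuclideanSpace ℝ (Fin 2) → EuclideanSpace ℝ (Fin 2),
      ContinuousOn g (Metric.sphere 0 1) ∧ Set.InjOn g (Metric.sphere 0 1) ∧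
      g '' Metric.sphere 0 1 = Γ) :
    (∃ C : ℝ, 0 ≤ C ∧ ∃ φ : ℝ → EuclideanSpace ℝ (Fin 2), IsLoopParam φ 1 Γ ∧
      ∀ x ∈ Set.Icc (0:ℝ) 1, ∀ y ∈ Set.Icc (0:ℝ) 1,
        dist (φ x) (φ y) ≤ C * |x - y| ^ α) ↔
    (∃ ψ : ℝ → EuclideanSpace ℝ (Fin 2), IsLoopParam ψ 1 Γ ∧
      BddAbove (pContentSums (1 / α) ψ)) :=
  holder_param_iff_finite_content' α hα Γ
end

section
/- Let α ∈ (0,1), set p = 1/α, and let Γ ⊂ ℝ² be a Jordan curve with finite p-content, V := |Γ|_p < ∞. Then there exists a loop parametrization φ : [0,V] → Γ satisfying |φ(s) − φ(t)| ≤ |s − t|^α for all s, t ∈ [0,V]. -/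
open Set Metric

open Finset

noncomputable section

namespace PCont

variable (p : ℝ) (ψ : ℝ → EuclideanSpace ℝ (Fin 2))

def psum (t : ℕ → ℝ) (n : ℕ) : ℝ :=
  ∑ i ∈ Finset.range n, dist (ψ (t (i+1))) (ψ (t i)) ^ p

def IsPart (a b : ℝ) (t : ℕ → ℝ) (n : ℕ) : Prop :=
  StrictMonoOn t (Set.Iic n) ∧ t 0 = a ∧ t n = b

def PSums (a b : ℝ) : Set ℝ := {S | ∃ n t, IsPart a b t n ∧ S = psum p ψ t n}

variable {p ψ}

lemma psum_nonneg (t : ℕ → ℝ) (n : ℕ) : 0 ≤ psum p ψ t n :=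
  Finset.sum_nonneg fun _ _ => Real.rpow_nonneg dist_nonneg p

namespace IsPart

variable {a b c x : ℝ} {t u : ℕ → ℝ} {n m : ℕ}

lemma le (h : IsPart a b t n) : a ≤ b := by
  rw [← h.2.1, ← h.2.2]
  exact h.1.monotoneOn (Set.mem_Iic.2 (Nat.zero_le n)) (Set.mem_Iic.2 le_rfl) (Nat.zero_le n)

lemma mem_Icc (h : IsPart a b t n) {i : ℕ} (hi : i ≤ n) : t i ∈ Set.Icc a b := by
  constructor
  · rw [← h.2.1]
    exact h.1.monotoneOn (Set.mem_Iic.2 (Nat.zero_le n)) (Set.mem_Iic.2 hi) (Nat.zero_le i)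
  · rw [← h.2.2]
    exact h.1.monotoneOn (Set.mem_Iic.2 hi) (Set.mem_Iic.2 le_rfl) hi

lemma const (a : ℝ) : IsPart a a (fun _ => a) 0 := by
  refine ⟨?_, rfl, rfl⟩
  intro i hi j hj hij
  simp only [Set.mem_Iic, Nat.le_zero] at hi hj
  omega

lemma pair (hab : a < b) : IsPart a b (fun i => if i = 0 then a else b) 1 := by
  refine ⟨?_, by simp, by simp⟩
  intro i hi j hj hij
  simp only [Set.mem_Iic] at hi hj
  have : i = 0 := by omega
  have : j = 1 := by omega
  simp_all

lemma psum_pair (hab : a < b) :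
    psum p ψ (fun i => if i = 0 then a else b) 1 = dist (ψ b) (ψ a) ^ p := by
  simp [psum]

lemma append (h : IsPart a b t n) (hx : b < x) :
    IsPart a x (fun i => if i ≤ n then t i else x) (n+1) ∧
      psum p ψ (fun i => if i ≤ n then t i else x) (n+1)
        = psum p ψ t n + dist (ψ x) (ψ b) ^ p := by
  constructor
  · refine ⟨?_, by simp [h.2.1], by simp⟩
    intro i hi j hj hij
    simp only [Set.mem_Iic] at hi hj
    by_cases hjn : j ≤ n
    · have hin : i ≤ n := by omega
      simp only [hin, hjn, if_pos]
      exact h.1 (Set.mem_Iic.2 hin) (Set.mem_Iic.2 hjn) hij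
    · have hin : i ≤ n := by omega
      simp only [hin, if_pos, hjn, if_neg, not_false_iff]
      calc t i ≤ t n := h.1.monotoneOn (Set.mem_Iic.2 hin) (Set.mem_Iic.2 le_rfl) hin
        _ = b := h.2.2
        _ < x := hx
  · rw [psum, Finset.sum_range_succ]
    congr 1
    · refine Finset.sum_congr rfl fun i hi => ?_
      rw [Finset.mem_range] at hi
      have h1 : i + 1 ≤ n := hi
      have h2 : i ≤ n := by omega
      simp [h1, h2, psum]
    · have h1 : ¬ (n + 1 ≤ n) := by omega
      simp [h1, h.2.2]

lemma prepend (h : IsPart a b t n) (hx : x < a) :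
    IsPart x b (fun i => if i = 0 then x else t (i-1)) (n+1) ∧
      psum p ψ (fun i => if i = 0 then x else t (i-1)) (n+1)
        = dist (ψ a) (ψ x) ^ p + psum p ψ t n := by
  constructor
  · refine ⟨?_, by simp, by simp [h.2.2]⟩
    intro i hi j hj hij
    simp only [Set.mem_Iic] at hi hj
    by_cases hi0 : i = 0
    · have hj0 : j ≠ 0 := by omega
      simp only [hi0, if_pos, hj0, if_neg, not_false_iff]
      calc x < a := hx
        _ = t 0 := h.2.1.symm
        _ ≤ t (j-1) := h.1.monotoneOn (Set.mem_Iic.2 (Nat.zero_le n))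
            (Set.mem_Iic.2 (by omega)) (Nat.zero_le _)
    · have hj0 : j ≠ 0 := by omega
      simp only [hi0, hj0, if_neg, not_false_iff]
      exact h.1 (Set.mem_Iic.2 (by omega)) (Set.mem_Iic.2 (by omega)) (by omega)
  · rw [psum, Finset.sum_range_succ', add_comm (dist (ψ a) (ψ x) ^ p)]
    congr 1
    · simp [h.2.1]

lemma glue (h1 : IsPart a b t n) (h2 : IsPart b c u m) :
    IsPart a c (fun i => if i ≤ n then t i else u (i-n)) (n+m) ∧
      psum p ψ (fun i => if i ≤ n then t i else u (i-n)) (n+m)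
        = psum p ψ t n + psum p ψ u m := by
  have hu0 : u 0 = b := h2.2.1
  constructor
  · refine ⟨?_, by simp [h1.2.1], ?_⟩
    · intro i hi j hj hij
      simp only [Set.mem_Iic] at hi hj
      by_cases hjn : j ≤ n
      · have hin : i ≤ n := by omega
        simp only [hin, hjn, if_pos]
        exact h1.1 (Set.mem_Iic.2 hin) (Set.mem_Iic.2 hjn) hij
      · by_cases hin : i ≤ n
        · simp only [hin, if_pos, hjn, if_neg, not_false_iff]
          calc t i ≤ t n := h1.1.monotoneOn (Set.mem_Iic.2 hin) (Set.mem_Iic.2 le_rfl) hin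
            _ = b := h1.2.2
            _ = u 0 := hu0.symm
            _ < u (j - n) := h2.1 (Set.mem_Iic.2 (Nat.zero_le m))
                (Set.mem_Iic.2 (by omega)) (by omega)
        · simp only [hin, hjn, if_neg, not_false_iff]
          exact h2.1 (Set.mem_Iic.2 (by omega)) (Set.mem_Iic.2 (by omega)) (by omega)
    · by_cases hm : m = 0
      · have : b = c := by rw [← h2.2.1, ← h2.2.2, hm]
        simp [hm, h1.2.2, this]
      · have hnm : ¬ (n + m ≤ n) := by omega
        simp only [hnm, if_neg, not_false_iff]
        rw [Nat.add_sub_cancel_left]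
        exact h2.2.2
  · rw [psum, ← Finset.sum_range_add_sum_Ico _ (Nat.le_add_right n m),
      Finset.sum_Ico_eq_sum_range]
    congr 1
    · refine Finset.sum_congr rfl fun i hi => ?_
      rw [Finset.mem_range] at hi
      have h1' : i + 1 ≤ n := hi
      have h2' : i ≤ n := by omega
      simp [h1', h2', psum]
    · rw [Nat.add_sub_cancel_left, psum]
      refine Finset.sum_congr rfl fun i hi => ?_
      have e1 : ¬ (n + i + 1 ≤ n) := by omega
      have e2 : n + i + 1 - n = i + 1 := by omega
      by_cases hi0 : i = 0
      · subst hi0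
        simp only [e1, if_neg, not_false_iff, e2, Nat.add_zero, le_refl, if_pos]
        rw [h1.2.2, ← hu0]
      · have e3 : ¬ (n + i ≤ n) := by omega
        have e4 : n + i - n = i := by omega
        simp only [e1, e3, if_neg, not_false_iff, e2, e4]

lemma strictMono_fix {i : ℕ} (h : IsPart a b t n) (hi : i ≤ n) : IsPart a (t i) t i :=
  ⟨h.1.mono (fun j hj => Set.mem_Iic.2 (le_trans (Set.mem_Iic.1 hj) hi)), h.2.1, rfl⟩

lemma shift {k : ℕ} (h : IsPart a b t n) (hk : k ≤ n) :
    IsPart (t k) b (fun i => t (k+i)) (n-k) ∧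
      psum p ψ t n = psum p ψ t k + psum p ψ (fun i => t (k+i)) (n-k) := by
  constructor
  · refine ⟨?_, rfl, by simp [Nat.add_sub_cancel' hk, h.2.2]⟩
    intro i hi j hj hij
    simp only [Set.mem_Iic] at hi hj
    exact h.1 (Set.mem_Iic.2 (by omega)) (Set.mem_Iic.2 (by omega)) (by omega)
  · rw [psum, psum, psum]
    have hn : n = k + (n - k) := by omega
    rw [hn, ← Finset.sum_range_add_sum_Ico _ (Nat.le_add_right k (n-k)),
      Finset.sum_Ico_eq_sum_range, Nat.add_sub_cancel_left]
    rfl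

end IsPart

section Sups

variable {p : ℝ} {ψ : ℝ → EuclideanSpace ℝ (Fin 2)} {a b c a' b' : ℝ}

lemma psums_nonempty (hab : a ≤ b) : (PSums p ψ a b).Nonempty := by
  rcases eq_or_lt_of_le hab with h | h
  · subst h
    exact ⟨0, 0, _, IsPart.const a, by simp [psum]⟩
  · exact ⟨_, 1, _, IsPart.pair h, rfl⟩

lemma nonneg_of_mem_psums {S : ℝ} (h : S ∈ PSums p ψ a b) : 0 ≤ S := by
  obtain ⟨n, t, _, rfl⟩ := h
  exact psum_nonneg t n

lemma psums_subset_pContent (h0 : 0 ≤ a) (h1 : b ≤ 1) :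
    PSums p ψ a b ⊆ pContentSums p ψ := by
  rintro S ⟨n, t, ht, rfl⟩
  refine ⟨n, fun i => t i.val, ?_, ?_, ?_⟩
  · intro i j hij
    exact ht.1 (Set.mem_Iic.2 (Nat.lt_succ_iff.1 i.isLt))
      (Set.mem_Iic.2 (Nat.lt_succ_iff.1 j.isLt)) (Fin.lt_def.1 hij)
  · intro i
    have := ht.mem_Icc (Nat.lt_succ_iff.1 i.isLt)
    exact ⟨le_trans h0 this.1, le_trans this.2 h1⟩
  · rw [psum, ← Fin.sum_univ_eq_sum_range (fun i => dist (ψ (t (i+1))) (ψ (t i)) ^ p) n]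
    exact Finset.sum_congr rfl fun i _ => by simp [Fin.val_succ]

variable (p ψ) in
def sg (a b : ℝ) : ℝ := sSup (PSums p ψ a b)

variable (hB : BddAbove (pContentSums p ψ))
include hB

lemma psums_bddAbove (h0 : 0 ≤ a) (h1 : b ≤ 1) : BddAbove (PSums p ψ a b) :=
  hB.mono (psums_subset_pContent h0 h1)

lemma le_sg_of_mem {S : ℝ} (h0 : 0 ≤ a) (h1 : b ≤ 1) (h : S ∈ PSums p ψ a b) :
    S ≤ sg p ψ a b :=
  le_csSup (psums_bddAbove hB h0 h1) h

lemma sg_nonneg (h0 : 0 ≤ a) (hab : a ≤ b) (h1 : b ≤ 1) : 0 ≤ sg p ψ a b := by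
  obtain ⟨S, hS⟩ := psums_nonempty (p := p) (ψ := ψ) hab
  exact le_trans (nonneg_of_mem_psums hS) (le_sg_of_mem hB h0 h1 hS)

lemma dist_rpow_le_sg (hp0 : 0 < p) (h0 : 0 ≤ a) (hab : a ≤ b) (h1 : b ≤ 1) :
    dist (ψ a) (ψ b) ^ p ≤ sg p ψ a b := by
  rcases eq_or_lt_of_le hab with h | h
  · subst h
    rw [dist_self, Real.zero_rpow hp0.ne']
    exact sg_nonneg hB h0 le_rfl h1
  · rw [dist_comm]
    exact le_sg_of_mem hB h0 h1 ⟨1, _, IsPart.pair h, (IsPart.psum_pair h).symm⟩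

lemma glue_sg (h0 : 0 ≤ a) (hab : a ≤ b) (hbc : b ≤ c) (h1 : c ≤ 1) :
    sg p ψ a b + sg p ψ b c ≤ sg p ψ a c := by
  have key : ∀ S1 ∈ PSums p ψ a b, ∀ S2 ∈ PSums p ψ b c, S1 + S2 ≤ sg p ψ a c := by
    rintro S1 ⟨n, t, ht, rfl⟩ S2 ⟨m, u, hu, rfl⟩
    obtain ⟨hw, hsum⟩ := ht.glue hu
    have := le_sg_of_mem hB h0 h1 ⟨n+m, _, hw, rfl⟩
    rwa [hsum] at this
  have h2 : ∀ S1 ∈ PSums p ψ a b, S1 + sg p ψ b c ≤ sg p ψ a c := by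
    intro S1 hS1
    rw [← le_sub_iff_add_le']
    exact csSup_le (psums_nonempty hbc) fun S2 hS2 => le_sub_iff_add_le'.2 (key S1 hS1 S2 hS2)
  have h3 : sg p ψ a b ≤ sg p ψ a c - sg p ψ b c :=
    csSup_le (psums_nonempty hab) fun S1 hS1 => le_sub_iff_add_le.2 (h2 S1 hS1)
  linarith

lemma sg_mono (h0 : 0 ≤ a) (ha : a ≤ a') (hab : a' ≤ b') (hb : b' ≤ b) (h1 : b ≤ 1) :
    sg p ψ a' b' ≤ sg p ψ a b := by
  have g1 := glue_sg hB h0 ha hab (hb.trans h1)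
  have g2 := glue_sg hB h0 (ha.trans hab) hb h1
  have n1 := sg_nonneg hB h0 ha (hab.trans (hb.trans h1))
  have n2 := sg_nonneg hB (h0.trans (ha.trans hab)) hb h1
  linarith

lemma exists_extend {t : ℕ → ℝ} {n : ℕ} (ht : IsPart a b t n) (h0 : 0 ≤ a) (h1 : b ≤ 1) :
    ∃ S' ∈ PSums p ψ 0 1, psum p ψ t n ≤ S' := by
  obtain ⟨t₂, n₂, ht₂, hle₂⟩ : ∃ t₂ n₂, IsPart 0 b t₂ n₂ ∧ psum p ψ t n ≤ psum p ψ t₂ n₂ := by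
    rcases eq_or_lt_of_le h0 with h|h
    · exact ⟨t, n, h ▸ ht, le_rfl⟩
    · obtain ⟨hw, hs⟩ := ht.prepend h
      refine ⟨_, n+1, hw, ?_⟩
      rw [hs]
      have := Real.rpow_nonneg (dist_nonneg (x := ψ a) (y := ψ 0)) p
      linarith
  rcases eq_or_lt_of_le h1 with h|h
  · exact ⟨_, ⟨n₂, t₂, h ▸ ht₂, rfl⟩, hle₂⟩
  · obtain ⟨hw, hs⟩ := ht₂.append h
    refine ⟨_, ⟨n₂+1, _, hw, rfl⟩, ?_⟩
    rw [hs]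
    have := Real.rpow_nonneg (dist_nonneg (x := ψ 1) (y := ψ b)) p
    linarith

omit hB in
lemma finpart_to_part {n : ℕ} {t : Fin (n+1) → ℝ} (hmono : StrictMono t) :
    ∃ t' : ℕ → ℝ, IsPart (t 0) (t (Fin.last n)) t' n ∧
      ∑ i : Fin n, dist (ψ (t i.succ)) (ψ (t i.castSucc)) ^ p = psum p ψ t' n := by
  refine ⟨fun i => t ⟨min i n, by omega⟩, ⟨?_, ?_, ?_⟩, ?_⟩
  · intro i hi j hj hij
    simp only [Set.mem_Iic] at hi hj
    exact hmono (by simp [Fin.lt_def, hi, hj]; omega)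
  · congr 1
  · congr 1
    simp [Fin.last]
  · rw [psum, ← Fin.sum_univ_eq_sum_range
      (fun i => dist (ψ (t ⟨min (i+1) n, by omega⟩)) (ψ (t ⟨min i n, by omega⟩)) ^ p) n]
    refine Finset.sum_congr rfl fun i _ => ?_
    have hi := i.isLt
    congr 2
    · exact congrArg ψ (congrArg t (Fin.ext
        (by simp only [Fin.val_succ, Fin.val_mk]; omega)))
    · exact congrArg ψ (congrArg t (Fin.ext
        (by simp only [Fin.coe_castSucc, Fin.val_mk]; omega)))

lemma sg_eq_sSup_pContent : sg p ψ 0 1 = sSup (pContentSums p ψ) := by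
  apply le_antisymm
  · exact csSup_le (psums_nonempty zero_le_one)
      fun S hS => le_csSup hB (psums_subset_pContent le_rfl le_rfl hS)
  · have hne : (pContentSums p ψ).Nonempty := by
      refine ⟨0, 0, fun _ => 0, ?_, by simp, by simp⟩
      intro i j hij
      have := i.isLt; have := j.isLt
      rw [Fin.lt_def] at hij
      omega
    refine csSup_le hne ?_
    rintro S ⟨n, t, hmono, hmem, rfl⟩
    obtain ⟨t', ht', hsum⟩ := finpart_to_part (ψ := ψ) (p := p) hmono
    obtain ⟨S', hS', hle⟩ := exists_extend hB ht' (hmem 0).1 (hmem (Fin.last n)).2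
    exact le_trans (hsum ▸ hle) (le_sg_of_mem hB le_rfl le_rfl hS')

omit hB in
lemma psums_self : PSums p ψ a a = {0} := by
  ext S
  simp only [Set.mem_singleton_iff]
  constructor
  · rintro ⟨n, t, ht, rfl⟩
    have hn : n = 0 := by
      by_contra h
      have := ht.1 (Set.mem_Iic.2 (Nat.zero_le n)) (Set.mem_Iic.2 le_rfl)
        (Nat.pos_of_ne_zero h)
      rw [ht.2.1, ht.2.2] at this
      exact lt_irrefl a this
    subst hn
    simp [psum]
  · rintro rfl
    exact ⟨0, _, IsPart.const a, by simp [psum]⟩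

omit hB in
lemma sg_self : sg p ψ a a = 0 := by rw [sg, psums_self, csSup_singleton]

lemma sg_small_right (hψc : ContinuousOn ψ (Set.Icc 0 1)) (hp0 : 0 < p)
    {t₀ : ℝ} (h0 : 0 ≤ t₀) (h1 : t₀ ≤ 1) {ε : ℝ} (hε : 0 < ε) :
    ∃ δ > 0, ∀ t, t₀ ≤ t → t ≤ 1 → t ≤ t₀ + δ → sg p ψ t₀ t ≤ ε := by
  rcases eq_or_lt_of_le h1 with heq | h1'
  · refine ⟨1, one_pos, fun t htt ht1 _ => ?_⟩
    have : t = t₀ := le_antisymm (heq ▸ ht1) htt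
    rw [this, sg_self]
    exact hε.le
  by_contra hcon
  push_neg at hcon
  have step0 : ∀ t, t₀ < t → t ≤ 1 → ε < sg p ψ t₀ t := by
    intro t ht h1t
    obtain ⟨t', h1'', h2'', _, h4''⟩ := hcon (t - t₀) (by linarith)
    exact lt_of_lt_of_le h4'' (sg_mono hB h0 le_rfl h1'' (by linarith) h1t)
  have hr : (0:ℝ) < (ε/4) ^ p⁻¹ := Real.rpow_pos_of_pos (by linarith) _
  have hcw : ContinuousWithinAt ψ (Set.Icc 0 1) t₀ := hψc t₀ ⟨h0, h1⟩
  obtain ⟨δ₁, hδ₁, hψδ⟩ := Metric.continuousWithinAt_iff.1 hcw _ hr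
  set t₁ := min 1 (t₀ + δ₁/2) with ht₁def
  have ht₀t₁ : t₀ < t₁ := lt_min h1' (by linarith)
  have ht₁1 : t₁ ≤ 1 := min_le_left _ _
  have hdist : ∀ u, t₀ ≤ u → u ≤ t₁ → dist (ψ u) (ψ t₀) ^ p ≤ ε/4 := by
    intro u hu1 hu2
    have hu : u ∈ Set.Icc (0:ℝ) 1 := ⟨le_trans h0 hu1, le_trans hu2 ht₁1⟩
    have hu3 : u ≤ t₀ + δ₁/2 := le_trans hu2 (min_le_right _ _)
    have hud : dist u t₀ < δ₁ := by
      rw [Real.dist_eq, abs_of_nonneg (by linarith)]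
      linarith
    have hd := hψδ hu hud
    calc dist (ψ u) (ψ t₀) ^ p ≤ ((ε/4) ^ p⁻¹) ^ p :=
          Real.rpow_le_rpow dist_nonneg hd.le hp0.le
      _ = ε/4 := by
          rw [← Real.rpow_mul (by linarith), inv_mul_cancel₀ hp0.ne', Real.rpow_one]
  have step : ∀ b, t₀ < b → b ≤ t₁ → ∃ a, t₀ < a ∧ a < b ∧ ε/2 ≤ sg p ψ a b := by
    intro b hb1 hb2
    have hb1' : b ≤ 1 := le_trans hb2 ht₁1
    have hsg : ε < sg p ψ t₀ b := step0 b hb1 hb1'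
    obtain ⟨S, hSmem, hSgt⟩ := exists_lt_of_lt_csSup (psums_nonempty hb1.le) hsg
    obtain ⟨n, t, ht, rfl⟩ := hSmem
    have hn : 1 ≤ n := by
      rcases Nat.eq_zero_or_pos n with rfl | h
      · rw [psum] at hSgt
        simp at hSgt
        linarith
      · exact h
    obtain ⟨hshift, hsplit⟩ := ht.shift (k := 1) hn
    have h1sum : psum p ψ t 1 = dist (ψ (t 1)) (ψ t₀) ^ p := by
      simp [psum, ht.2.1]
    have ht1mem := ht.mem_Icc hn
    have hsmall : dist (ψ (t 1)) (ψ t₀) ^ p ≤ ε/4 :=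
      hdist _ ht1mem.1 (le_trans ht1mem.2 hb2)
    have hle2 : psum p ψ (fun i => t (1+i)) (n-1) ≤ sg p ψ (t 1) b :=
      le_sg_of_mem hB (le_trans h0 ht1mem.1) hb1' ⟨_, _, hshift, rfl⟩
    have hge : ε/2 ≤ sg p ψ (t 1) b := by
      rw [hsplit, h1sum] at hSgt
      linarith
    refine ⟨t 1, ?_, ?_, hge⟩
    · have := ht.1 (Set.mem_Iic.2 (Nat.zero_le n)) (Set.mem_Iic.2 hn) Nat.zero_lt_one
      rwa [ht.2.1] at this
    · rcases eq_or_lt_of_le ht1mem.2 with h | h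
      · rw [h, sg_self] at hge
        linarith
      · exact h
  have stepT : ∀ b : {x : ℝ // t₀ < x ∧ x ≤ t₁},
      ∃ a : {x : ℝ // t₀ < x ∧ x ≤ t₁}, a.1 < b.1 ∧ ε/2 ≤ sg p ψ a.1 b.1 := by
    rintro ⟨b, hb1, hb2⟩
    obtain ⟨a, ha1, ha2, ha3⟩ := step b hb1 hb2
    exact ⟨⟨a, ha1, le_trans ha2.le hb2⟩, ha2, ha3⟩
  choose next hlt hge using stepT
  set f : ℕ → {x : ℝ // t₀ < x ∧ x ≤ t₁} :=
    fun k => next^[k] ⟨t₁, ht₀t₁, le_rfl⟩ with hfdef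
  have hf : ∀ k, f (k+1) = next (f k) := fun k => Function.iterate_succ_apply' next k _
  have chain : ∀ N : ℕ, (N : ℝ) * (ε/2) ≤ sg p ψ (f N).1 t₁ := by
    intro N
    induction N with
    | zero =>
        show (0:ℕ) * (ε/2) ≤ sg p ψ ((f 0).1) t₁
        have : (f 0).1 = t₁ := rfl
        rw [this, sg_self]
        simp
    | succ N ih =>
        have hglue := glue_sg hB (le_trans h0 (f (N+1)).2.1.le)
          (by rw [hf N]; exact (hlt (f N)).le) (f N).2.2 ht₁1
        have hstep := hge (f N)
        rw [← hf N] at hstep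
        push_cast
        linarith
  obtain ⟨N, hN⟩ := exists_nat_gt (sg p ψ 0 1 / (ε/2))
  have hb : sg p ψ (f N).1 t₁ ≤ sg p ψ 0 1 :=
    sg_mono hB le_rfl (le_trans h0 (f N).2.1.le) (f N).2.2 ht₁1 le_rfl
  have hc := chain N
  rw [div_lt_iff₀ (by linarith)] at hN
  linarith

omit hB in
lemma psum_succ {t : ℕ → ℝ} {n : ℕ} :
    psum p ψ t (n+1) = psum p ψ t n + dist (ψ (t (n+1))) (ψ (t n)) ^ p := by
  rw [psum, Finset.sum_range_succ, psum]

lemma sg_small_left (hψc : ContinuousOn ψ (Set.Icc 0 1)) (hp0 : 0 < p)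
    {t₀ : ℝ} (h0 : 0 ≤ t₀) (h1 : t₀ ≤ 1) {ε : ℝ} (hε : 0 < ε) :
    ∃ δ > 0, ∀ t, 0 ≤ t → t ≤ t₀ → t₀ - δ ≤ t → sg p ψ t t₀ ≤ ε := by
  rcases eq_or_lt_of_le h0 with heq | h0'
  · refine ⟨1, one_pos, fun t ht0 htt _ => ?_⟩
    have : t = t₀ := le_antisymm htt (heq ▸ ht0)
    rw [this, sg_self]
    exact hε.le
  by_contra hcon
  push_neg at hcon
  have step0 : ∀ t, 0 ≤ t → t < t₀ → ε < sg p ψ t t₀ := by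
    intro t ht h1t
    obtain ⟨t', h1'', h2'', h3'', h4''⟩ := hcon (t₀ - t) (by linarith)
    exact lt_of_lt_of_le h4'' (sg_mono hB ht (by linarith) h2'' le_rfl h1)
  have hr : (0:ℝ) < (ε/4) ^ p⁻¹ := Real.rpow_pos_of_pos (by linarith) _
  have hcw : ContinuousWithinAt ψ (Set.Icc 0 1) t₀ := hψc t₀ ⟨h0, h1⟩
  obtain ⟨δ₁, hδ₁, hψδ⟩ := Metric.continuousWithinAt_iff.1 hcw _ hr
  set t₁ := max 0 (t₀ - δ₁/2) with ht₁def
  have ht₀t₁ : t₁ < t₀ := max_lt h0' (by linarith)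
  have ht₁0 : 0 ≤ t₁ := le_max_left _ _
  have hdist : ∀ u, t₁ ≤ u → u ≤ t₀ → dist (ψ u) (ψ t₀) ^ p ≤ ε/4 := by
    intro u hu1 hu2
    have hu : u ∈ Set.Icc (0:ℝ) 1 := ⟨le_trans ht₁0 hu1, le_trans hu2 h1⟩
    have hu3 : t₀ - δ₁/2 ≤ u := le_trans (le_max_right _ _) hu1
    have hud : dist u t₀ < δ₁ := by
      rw [Real.dist_eq, abs_of_nonpos (by linarith)]
      linarith
    have hd := hψδ hu hud
    calc dist (ψ u) (ψ t₀) ^ p ≤ ((ε/4) ^ p⁻¹) ^ p :=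
          Real.rpow_le_rpow dist_nonneg hd.le hp0.le
      _ = ε/4 := by
          rw [← Real.rpow_mul (by linarith), inv_mul_cancel₀ hp0.ne', Real.rpow_one]
  have step : ∀ b, t₁ ≤ b → b < t₀ → ∃ a, b < a ∧ a < t₀ ∧ ε/2 ≤ sg p ψ b a := by
    intro b hb1 hb2
    have hb0 : 0 ≤ b := le_trans ht₁0 hb1
    have hsg : ε < sg p ψ b t₀ := step0 b hb0 hb2
    obtain ⟨S, hSmem, hSgt⟩ := exists_lt_of_lt_csSup (psums_nonempty hb2.le) hsg
    obtain ⟨n, t, ht, rfl⟩ := hSmem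
    obtain ⟨m, rfl⟩ : ∃ m, n = m + 1 := by
      rcases Nat.eq_zero_or_pos n with rfl | h
      · rw [psum] at hSgt
        simp at hSgt
        linarith
      · exact ⟨n - 1, by omega⟩
    rw [psum_succ] at hSgt
    have htmmem := ht.mem_Icc (Nat.le_succ m)
    have hsmall : dist (ψ (t (m+1))) (ψ (t m)) ^ p ≤ ε/4 := by
      rw [ht.2.2, dist_comm]
      exact hdist _ (le_trans hb1 htmmem.1) htmmem.2
    have hfix := ht.strictMono_fix (Nat.le_succ m)
    have hle2 : psum p ψ t m ≤ sg p ψ b (t m) :=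
      le_sg_of_mem hB hb0 (le_trans htmmem.2 h1) ⟨_, _, hfix, rfl⟩
    have hge : ε/2 ≤ sg p ψ b (t m) := by linarith
    refine ⟨t m, ?_, ?_, hge⟩
    · rcases eq_or_lt_of_le htmmem.1 with h | h
      · rw [← h, sg_self] at hge
        linarith
      · exact h
    · have := ht.1 (Set.mem_Iic.2 (Nat.le_succ m)) (Set.mem_Iic.2 le_rfl) (Nat.lt_succ_self m)
      rwa [ht.2.2] at this
  have stepT : ∀ b : {x : ℝ // t₁ ≤ x ∧ x < t₀},
      ∃ a : {x : ℝ // t₁ ≤ x ∧ x < t₀}, b.1 < a.1 ∧ ε/2 ≤ sg p ψ b.1 a.1 := by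
    rintro ⟨b, hb1, hb2⟩
    obtain ⟨a, ha1, ha2, ha3⟩ := step b hb1 hb2
    exact ⟨⟨a, le_trans hb1 ha1.le, ha2⟩, ha1, ha3⟩
  choose next hlt hge using stepT
  set f : ℕ → {x : ℝ // t₁ ≤ x ∧ x < t₀} :=
    fun k => next^[k] ⟨t₁, le_rfl, ht₀t₁⟩ with hfdef
  have hf : ∀ k, f (k+1) = next (f k) := fun k => Function.iterate_succ_apply' next k _
  have chain : ∀ N : ℕ, (N : ℝ) * (ε/2) ≤ sg p ψ t₁ (f N).1 := by
    intro N
    induction N with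
    | zero =>
        show (0:ℕ) * (ε/2) ≤ sg p ψ t₁ ((f 0).1)
        have : (f 0).1 = t₁ := rfl
        rw [this, sg_self]
        simp
    | succ N ih =>
        have hglue := glue_sg hB ht₁0 (f N).2.1
          (by rw [hf N]; exact (hlt (f N)).le) (le_trans (f (N+1)).2.2.le h1)
        have hstep := hge (f N)
        rw [← hf N] at hstep
        push_cast
        linarith
  obtain ⟨N, hN⟩ := exists_nat_gt (sg p ψ 0 1 / (ε/2))
  have hb : sg p ψ t₁ (f N).1 ≤ sg p ψ 0 1 :=
    sg_mono hB le_rfl ht₁0 (f N).2.1 (le_trans (f N).2.2.le h1) le_rfl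
  have hc := chain N
  rw [div_lt_iff₀ (by linarith)] at hN
  linarith

lemma sg_insert (hp0 : 0 < p) {x b η ε₁ M : ℝ} (h0 : 0 ≤ x) (hxb : x ≤ b) (h1 : b ≤ 1)
    (hM : ∀ u, 0 ≤ u → u ≤ 1 → ∀ v, 0 ≤ v → v ≤ 1 → dist (ψ u) (ψ v) ≤ M)
    (hη : ∀ u, x ≤ u → u ≤ b → dist (ψ u) (ψ x) ≤ η)
    (hpow : ∀ d, 0 ≤ d → d ≤ M → (d + η) ^ p ≤ d ^ p + ε₁)
    (hε₁ : 0 ≤ ε₁) :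
    sg p ψ 0 b ≤ sg p ψ 0 x + sg p ψ x b + ε₁ := by
  classical
  rcases eq_or_lt_of_le hxb with rfl | hlt
  · rw [sg_self]
    linarith
  have h0b : (0:ℝ) ≤ b := le_trans h0 hxb
  have hx1 : x ≤ 1 := le_trans hxb h1
  refine csSup_le (psums_nonempty h0b) ?_
  rintro S ⟨n, t', ht', rfl⟩
  set i := Nat.findGreatest (fun j => t' j ≤ x) n with hidef
  have hPi : t' i ≤ x := by
    have h := Nat.findGreatest_spec (P := fun j => t' j ≤ x) (Nat.zero_le n)
      (show t' 0 ≤ x by rw [ht'.2.1]; exact h0)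
    simpa [← hidef] using h
  have hin : i ≤ n := Nat.findGreatest_le n
  have hiltn : i < n := by
    rcases eq_or_lt_of_le hin with h | h
    · rw [h, ht'.2.2] at hPi
      exact absurd hPi (not_le.2 hlt)
    · exact h
  have hnext : x < t' (i+1) :=
    not_le.1 (Nat.findGreatest_is_greatest (Nat.lt_succ_self i) hiltn)
  obtain ⟨hshift, hsplit⟩ := ht'.shift (k := i+1) hiltn
  rw [psum_succ] at hsplit
  set d := dist (ψ (t' i)) (ψ x) with hd
  have hd0 : (0:ℝ) ≤ d := dist_nonneg
  have hti_mem := ht'.mem_Icc hin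
  have hdM : d ≤ M :=
    hM _ hti_mem.1 (le_trans hti_mem.2 h1) x h0 hx1
  have hpart1 : psum p ψ t' i + d ^ p ≤ sg p ψ 0 x := by
    have hfix := ht'.strictMono_fix hin
    rcases eq_or_lt_of_le hPi with h | h
    · have hd2 : d = 0 := by rw [hd, h, dist_self]
      rw [hd2, Real.zero_rpow hp0.ne', add_zero]
      rw [h] at hfix
      exact le_sg_of_mem hB le_rfl hx1 ⟨_, _, hfix, rfl⟩
    · obtain ⟨hw, hs⟩ := hfix.append h
      have hle := le_sg_of_mem hB le_rfl hx1 ⟨_, _, hw, rfl⟩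
      rw [hs, dist_comm] at hle
      rw [hd]
      exact hle
  have hip1_mem := ht'.mem_Icc (show i+1 ≤ n from hiltn)
  have hcross : dist (ψ (t' (i+1))) (ψ (t' i)) ^ p ≤ d ^ p + ε₁ := by
    have h2a : dist (ψ (t' (i+1))) (ψ (t' i)) ≤ d + η := by
      have htri := dist_triangle (ψ (t' (i+1))) (ψ x) (ψ (t' i))
      have hsm : dist (ψ (t' (i+1))) (ψ x) ≤ η := hη _ hnext.le hip1_mem.2
      have hcomm : dist (ψ x) (ψ (t' i)) = d := dist_comm _ _
      linarith
    calc dist (ψ (t' (i+1))) (ψ (t' i)) ^ p ≤ (d + η) ^ p :=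
          Real.rpow_le_rpow dist_nonneg h2a hp0.le
      _ ≤ d ^ p + ε₁ := hpow d hd0 hdM
  have hpart3 : psum p ψ (fun j => t' (i+1+j)) (n-(i+1)) ≤ sg p ψ x b := by
    obtain ⟨hw, hs⟩ := hshift.prepend hnext
    have hmem := le_sg_of_mem hB h0 h1 ⟨_, _, hw, rfl⟩
    rw [hs] at hmem
    have := Real.rpow_nonneg (dist_nonneg (x := ψ (t' (i+1))) (y := ψ x)) p
    linarith
  rw [hsplit]
  linarith

lemma sg_mono01 (hs : 0 ≤ s') (hss : s' ≤ t') (ht : t' ≤ 1) :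
    sg p ψ 0 s' ≤ sg p ψ 0 t' := by
  have h1 := glue_sg hB le_rfl hs hss ht
  have h2 := sg_nonneg hB hs hss ht
  linarith

lemma sg_continuousOn (hψc : ContinuousOn ψ (Set.Icc 0 1)) (hp0 : 0 < p) :
    ContinuousOn (fun t => sg p ψ 0 t) (Set.Icc 0 1) := by
  intro t₀ ht₀
  obtain ⟨h00, h01⟩ := ht₀
  rw [Metric.continuousWithinAt_iff]
  intro ε hε
  set ε₁ := ε/4 with hε₁def
  have hε₁ : 0 < ε₁ := by positivity
  set W := sg p ψ 0 1 with hWdef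
  have hW0 : 0 ≤ W := sg_nonneg hB le_rfl zero_le_one le_rfl
  set M := W ^ p⁻¹ with hMdef
  have hM0 : 0 ≤ M := Real.rpow_nonneg hW0 _
  have hMd : ∀ u, 0 ≤ u → u ≤ 1 → ∀ v, 0 ≤ v → v ≤ 1 → dist (ψ u) (ψ v) ≤ M := by
    have key : ∀ a b', 0 ≤ a → a ≤ b' → b' ≤ 1 → dist (ψ a) (ψ b') ≤ M := by
      intro a b' ha hab' hb'
      have h₁ : dist (ψ a) (ψ b') ^ p ≤ W :=
        le_trans (dist_rpow_le_sg hB hp0 ha hab' hb')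
          (sg_mono hB le_rfl ha hab' hb' le_rfl)
      by_contra hgt
      push_neg at hgt
      have h₂ := Real.rpow_lt_rpow hM0 hgt hp0
      have hMp : M ^ p = W := by
        rw [hMdef, ← Real.rpow_mul hW0, inv_mul_cancel₀ hp0.ne', Real.rpow_one]
      linarith
    intro u hu0 hu1 v hv0 hv1
    rcases le_total u v with h | h
    · exact key u v hu0 h hv1
    · rw [dist_comm]
      exact key v u hv0 h hu1
  have hcont : Continuous (fun x : ℝ => x ^ p) := by
    rw [continuous_iff_continuousAt]
    intro x
    exact Real.continuousAt_rpow_const x p (Or.inr hp0.le)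
  have hUC := (isCompact_Icc (a := (0:ℝ)) (b := M+1)).uniformContinuousOn_of_continuous
    hcont.continuousOn
  obtain ⟨δ', hδ', hUC'⟩ := Metric.uniformContinuousOn_iff.1 hUC ε₁ hε₁
  set η := min (δ'/2) 1 with hηdef
  have hη0 : 0 < η := lt_min (by linarith) one_pos
  have hη1 : η ≤ 1 := min_le_right _ _
  have hηδ : η ≤ δ'/2 := min_le_left _ _
  have hpow : ∀ d, 0 ≤ d → d ≤ M → (d + η) ^ p ≤ d ^ p + ε₁ := by
    intro d hd0 hdM
    have h₁ : d + η ∈ Set.Icc (0:ℝ) (M+1) := ⟨by linarith, by linarith⟩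
    have h₂ : d ∈ Set.Icc (0:ℝ) (M+1) := ⟨hd0, by linarith⟩
    have h₃ : dist (d + η) d < δ' := by
      rw [Real.dist_eq]
      rw [show d + η - d = η by ring, abs_of_nonneg hη0.le]
      linarith
    have h₄ := hUC' _ h₁ _ h₂ h₃
    rw [Real.dist_eq] at h₄
    have h₅ : (d+η)^p - d^p ≤ |(d+η)^p - d^p| := le_abs_self _
    linarith
  obtain ⟨δ₁, hδ₁, hψδ⟩ := Metric.continuousWithinAt_iff.1 (hψc t₀ ⟨h00, h01⟩) (η/2)
    (by linarith)
  obtain ⟨δ₂, hδ₂, hsr⟩ := sg_small_right hB hψc hp0 h00 h01 hε₁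
  obtain ⟨δ₃, hδ₃, hsl⟩ := sg_small_left hB hψc hp0 h00 h01 hε₁
  refine ⟨min (min δ₁ δ₂) δ₃, by positivity, ?_⟩
  intro u hu hud
  obtain ⟨hu0, hu1⟩ := hu
  rw [Real.dist_eq] at hud
  have hud1 : |u - t₀| < δ₁ := lt_of_lt_of_le hud (le_trans (min_le_left _ _) (min_le_left _ _))
  have hud2 : |u - t₀| < δ₂ := lt_of_lt_of_le hud (le_trans (min_le_left _ _) (min_le_right _ _))
  have hud3 : |u - t₀| < δ₃ := lt_of_lt_of_le hud (min_le_right _ _)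
  show dist (sg p ψ 0 u) (sg p ψ 0 t₀) < ε
  rcases le_total t₀ u with hcase | hcase
  · have habs : |u - t₀| = u - t₀ := abs_of_nonneg (by linarith)
    have hsgsmall : sg p ψ t₀ u ≤ ε₁ := hsr u hcase hu1 (by rw [habs] at hud2; linarith)
    have hηb : ∀ v, t₀ ≤ v → v ≤ u → dist (ψ v) (ψ t₀) ≤ η := by
      intro v hv1 hv2
      have hv : dist (ψ v) (ψ t₀) < η/2 := hψδ ⟨le_trans h00 hv1, le_trans hv2 hu1⟩
        (by rw [Real.dist_eq, abs_of_nonneg (by linarith)]; rw [habs] at hud1; linarith)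
      linarith
    have hins := sg_insert hB hp0 h00 hcase hu1 hMd hηb hpow hε₁.le
    have hmono := sg_mono01 hB h00 hcase hu1
    rw [Real.dist_eq, abs_of_nonneg (by linarith)]
    linarith
  · have habs : |u - t₀| = t₀ - u := by rw [abs_sub_comm]; exact abs_of_nonneg (by linarith)
    have hsgsmall : sg p ψ u t₀ ≤ ε₁ := hsl u hu0 hcase (by rw [habs] at hud3; linarith)
    have hηb : ∀ v, u ≤ v → v ≤ t₀ → dist (ψ v) (ψ u) ≤ η := by
      intro v hv1 hv2
      have hv : dist (ψ v) (ψ t₀) < η/2 := hψδ ⟨le_trans hu0 hv1, le_trans hv2 h01⟩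
        (by rw [Real.dist_eq, abs_of_nonpos (by linarith)]; rw [habs] at hud1; linarith)
      have hu' : dist (ψ u) (ψ t₀) < η/2 := hψδ ⟨hu0, hu1⟩
        (by rw [Real.dist_eq]; exact hud1)
      have htri := dist_triangle (ψ v) (ψ t₀) (ψ u)
      have : dist (ψ t₀) (ψ u) = dist (ψ u) (ψ t₀) := dist_comm _ _
      linarith
    have hins := sg_insert hB hp0 hu0 hcase h01 hMd hηb hpow hε₁.le
    have hmono := sg_mono01 hB hu0 hcase h01
    rw [Real.dist_eq, abs_of_nonpos (by linarith)]
    linarith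

end Sups

end PCont

/-- A Jordan curve with finite `p`-content `V` (where `p = 1/α`) admits a
loop parametrization `φ : [0, V] → Γ` with `|φ(s) - φ(t)| ≤ |s - t|^α`. -/
theorem param_of_finite_content (α p : ℝ) (hα : α ∈ Set.Ioo (0:ℝ) 1) (hp : p = 1 / α)
    (Γ : Set (EuclideanSpace ℝ (Fin 2)))
    (hJordan : ∃ g : EuclideanSpace ℝ (Fin 2) → EuclideanSpace ℝ (Fin 2),
      ContinuousOn g (Metric.sphere 0 1) ∧ Set.InjOn g (Metric.sphere 0 1) ∧
      g '' Metric.sphere 0 1 = Γ)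
    (ψ : ℝ → EuclideanSpace ℝ (Fin 2)) (hψ : IsLoopParam ψ 1 Γ)
    (hBdd : BddAbove (pContentSums p ψ))
    (V : ℝ) (hV : V = sSup (pContentSums p ψ)) :
    ∃ φ : ℝ → EuclideanSpace ℝ (Fin 2), IsLoopParam φ V Γ ∧
      ∀ s ∈ Set.Icc (0:ℝ) V, ∀ t ∈ Set.Icc (0:ℝ) V,
        dist (φ s) (φ t) ≤ |s - t| ^ α := by
  classical
  obtain ⟨hα0, hα1⟩ := hα
  have hp0 : 0 < p := by rw [hp]; positivity
  obtain ⟨hψc, hψim, hψend, hψinj⟩ := hψ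
  set F : ℝ → ℝ := fun t => PCont.sg p ψ 0 t with hFdef
  have hF1 : F 1 = V := by rw [hV]; exact PCont.sg_eq_sSup_pContent hBdd
  have hF0 : F 0 = 0 := PCont.sg_self
  have hFmono : ∀ s t, 0 ≤ s → s ≤ t → t ≤ 1 → F s ≤ F t :=
    fun s t hs hst ht => PCont.sg_mono01 hBdd hs hst ht
  have hkey : ∀ s t, 0 ≤ s → s ≤ t → t ≤ 1 → F s + dist (ψ s) (ψ t) ^ p ≤ F t := by
    intro s t hs hst ht
    have h1 := PCont.glue_sg hBdd le_rfl hs hst ht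
    have h2 := PCont.dist_rpow_le_sg hBdd hp0 hs hst ht
    have h3 : F s = PCont.sg p ψ 0 s := rfl
    have h4 : F t = PCont.sg p ψ 0 t := rfl
    rw [h3, h4]
    linarith
  have hFcont : ContinuousOn F (Set.Icc 0 1) := PCont.sg_continuousOn hBdd hψc hp0
  have hV0 : 0 ≤ V := by
    rw [← hF1]
    exact PCont.sg_nonneg hBdd le_rfl zero_le_one le_rfl
  have hVpos : 0 < V := by
    obtain ⟨g, hgc, hginj, hgim⟩ := hJordan
    set x : EuclideanSpace ℝ (Fin 2) := EuclideanSpace.single 0 (1:ℝ) with hxdef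
    have hxs : x ∈ Metric.sphere (0 : EuclideanSpace ℝ (Fin 2)) 1 := by
      rw [mem_sphere_iff_norm, sub_zero, hxdef, EuclideanSpace.norm_single]
      norm_num
    have hys : -x ∈ Metric.sphere (0 : EuclideanSpace ℝ (Fin 2)) 1 := by
      rw [mem_sphere_iff_norm, sub_zero, norm_neg, hxdef, EuclideanSpace.norm_single]
      norm_num
    have hxy : x ≠ -x := by
      intro h
      have h0 := congrArg (fun v => v 0) h
      rw [hxdef] at h0
      simp [EuclideanSpace.single_apply] at h0
      linarith
    have h2 : g x ≠ g (-x) := fun h => hxy (hginj hxs hys h)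
    have hx' : g x ∈ Γ := by rw [← hgim]; exact ⟨x, hxs, rfl⟩
    have hy' : g (-x) ∈ Γ := by rw [← hgim]; exact ⟨-x, hys, rfl⟩
    rw [← hψim] at hx' hy'
    obtain ⟨s, hs, hψs⟩ := hx'
    obtain ⟨t, ht, hψt⟩ := hy'
    have hd : 0 < dist (ψ s) (ψ t) := dist_pos.2 (by rw [hψs, hψt]; exact h2)
    have hd' : 0 < dist (ψ (min s t)) (ψ (max s t)) := by
      rcases le_total s t with h | h
      · rwa [min_eq_left h, max_eq_right h]
      · rw [min_eq_right h, max_eq_left h, dist_comm]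
        exact hd
    have hk := hkey (min s t) (max s t) (le_min hs.1 ht.1) (min_le_max) (max_le hs.2 ht.2)
    have hpow := Real.rpow_pos_of_pos hd' p
    have hFmin : 0 ≤ F (min s t) := by
      rw [← hF0]
      exact hFmono 0 (min s t) le_rfl (le_min hs.1 ht.1) (le_trans min_le_max (max_le hs.2 ht.2))
    have hFmax : F (max s t) ≤ V := by
      rw [← hF1]
      exact hFmono (max s t) 1 (le_trans (le_min hs.1 ht.1) min_le_max) (max_le hs.2 ht.2) le_rfl
    linarith
  have hFstrict : ∀ s t, 0 ≤ s → s < t → t ≤ 1 → F s < F t := by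
    intro s t hs hst ht
    have hk := hkey s t hs hst.le ht
    rcases eq_or_lt_of_le (dist_nonneg (x := ψ s) (y := ψ t)) with hd | hd
    · have hst2 : ψ s = ψ t := dist_eq_zero.1 hd.symm
      rcases eq_or_lt_of_le ht with rfl | ht1
      · rcases eq_or_lt_of_le hs with rfl | hs1
        · rw [hF0, hF1]
          exact hVpos
        · have he : ψ s = ψ 0 := by rw [hst2, ← hψend]
          exact absurd (hψinj ⟨hs, hst⟩ ⟨le_rfl, zero_lt_one⟩ he) hs1.ne'
      · exact absurd (hψinj ⟨hs, lt_trans hst ht1⟩ ⟨le_trans hs hst.le, ht1⟩ hst2)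
          hst.ne
    · have := Real.rpow_pos_of_pos hd p
      linarith
  have huniq : ∀ s ∈ Set.Icc (0:ℝ) 1, ∀ t ∈ Set.Icc (0:ℝ) 1, F s = F t → s = t := by
    intro s hs t ht h
    rcases lt_trichotomy s t with hlt | he | hlt
    · exact absurd h (hFstrict s t hs.1 hlt ht.2).ne
    · exact he
    · exact absurd h.symm (hFstrict t s ht.1 hlt hs.2).ne
  have hsurj : ∀ u ∈ Set.Icc (0:ℝ) V, ∃ s ∈ Set.Icc (0:ℝ) 1, F s = u := by
    intro u hu
    have him := intermediate_value_Icc zero_le_one hFcont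
    have hu' : u ∈ Set.Icc (F 0) (F 1) := by rw [hF0, hF1]; exact hu
    obtain ⟨s, hs, hFs⟩ := him hu'
    exact ⟨s, hs, hFs⟩
  have hsurj' : ∀ u : ℝ, ∃ s, s ∈ Set.Icc (0:ℝ) 1 ∧ (u ∈ Set.Icc (0:ℝ) V → F s = u) := by
    intro u
    by_cases h : u ∈ Set.Icc (0:ℝ) V
    · obtain ⟨s, hs, hFs⟩ := hsurj u h
      exact ⟨s, hs, fun _ => hFs⟩
    · exact ⟨0, ⟨le_rfl, zero_le_one⟩, fun h' => absurd h' h⟩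
  choose G hG1 hG2 using hsurj'
  have hG0 : G 0 = 0 :=
    huniq _ (hG1 0) _ ⟨le_rfl, zero_le_one⟩ (by rw [hG2 0 ⟨le_rfl, hV0⟩, hF0])
  have hGV : G V = 1 :=
    huniq _ (hG1 V) _ ⟨zero_le_one, le_rfl⟩ (by rw [hG2 V ⟨hV0, le_rfl⟩, hF1])
  have hHolder : ∀ u ∈ Set.Icc (0:ℝ) V, ∀ v ∈ Set.Icc (0:ℝ) V,
      dist (ψ (G u)) (ψ (G v)) ≤ |u - v| ^ α := by
    have key : ∀ u v, u ∈ Set.Icc (0:ℝ) V → v ∈ Set.Icc (0:ℝ) V → G u ≤ G v →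
        dist (ψ (G u)) (ψ (G v)) ≤ |u - v| ^ α := by
      intro u v hu hv hGle
      have h1 := hkey (G u) (G v) (hG1 u).1 hGle (hG1 v).2
      rw [hG2 u hu, hG2 v hv] at h1
      have huv : u ≤ v := by
        have hm := hFmono (G u) (G v) (hG1 u).1 hGle (hG1 v).2
        rwa [hG2 u hu, hG2 v hv] at hm
      have habs : |u - v| = v - u := by
        rw [abs_sub_comm]
        exact abs_of_nonneg (by linarith)
      have hd : dist (ψ (G u)) (ψ (G v)) ^ p ≤ v - u := by linarith
      by_contra hgt
      push_neg at hgt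
      have h2 : (|u - v| ^ α) ^ p < dist (ψ (G u)) (ψ (G v)) ^ p :=
        Real.rpow_lt_rpow (Real.rpow_nonneg (abs_nonneg _) _) hgt hp0
      have h3 : (|u - v| ^ α) ^ p = v - u := by
        rw [← Real.rpow_mul (abs_nonneg _), hp,
          show α * (1/α) = 1 by field_simp, Real.rpow_one, habs]
      linarith
    intro u hu v hv
    rcases le_total (G u) (G v) with h | h
    · exact key u v hu hv h
    · rw [dist_comm, abs_sub_comm]
      exact key v u hv hu h
  refine ⟨fun u => ψ (G u), ⟨?_, ?_, ?_, ?_⟩, ?_⟩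
  · -- continuity
    intro u hu
    rw [Metric.continuousWithinAt_iff]
    intro ε hε
    refine ⟨ε ^ p, Real.rpow_pos_of_pos hε p, ?_⟩
    intro v hv hdv
    rw [Real.dist_eq] at hdv
    calc dist (ψ (G v)) (ψ (G u)) ≤ |v - u| ^ α := hHolder v hv u hu
      _ < (ε ^ p) ^ α := Real.rpow_lt_rpow (abs_nonneg _) hdv hα0
      _ = ε := by
          rw [← Real.rpow_mul hε.le, hp, show (1/α) * α = 1 by field_simp, Real.rpow_one]
  · -- image
    have hGim : G '' Set.Icc 0 V = Set.Icc (0:ℝ) 1 := by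
      apply Set.Subset.antisymm
      · rintro s ⟨u, hu, rfl⟩
        exact hG1 u
      · intro s hs
        refine ⟨F s, ⟨?_, ?_⟩, ?_⟩
        · rw [← hF0]
          exact hFmono 0 s le_rfl hs.1 hs.2
        · rw [← hF1]
          exact hFmono s 1 hs.1 hs.2 le_rfl
        · refine huniq _ (hG1 _) s hs ?_
          refine hG2 _ ⟨?_, ?_⟩
          · rw [← hF0]
            exact hFmono 0 s le_rfl hs.1 hs.2
          · rw [← hF1]
            exact hFmono s 1 hs.1 hs.2 le_rfl
    calc (fun u => ψ (G u)) '' Set.Icc 0 V = ψ '' (G '' Set.Icc 0 V) :=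
          (Set.image_comp ψ G _)
      _ = ψ '' Set.Icc 0 1 := by rw [hGim]
      _ = Γ := hψim
  · -- endpoints
    show ψ (G 0) = ψ (G V)
    rw [hG0, hGV, hψend]
  · -- injectivity
    intro u hu v hv h
    have hGu : G u ∈ Set.Ico (0:ℝ) 1 := by
      refine ⟨(hG1 u).1, lt_of_le_of_ne (hG1 u).2 fun h1 => ?_⟩
      have := hG2 u ⟨hu.1, hu.2.le⟩
      rw [h1, hF1] at this
      exact absurd this.symm hu.2.ne
    have hGv : G v ∈ Set.Ico (0:ℝ) 1 := by
      refine ⟨(hG1 v).1, lt_of_le_of_ne (hG1 v).2 fun h1 => ?_⟩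
      have := hG2 v ⟨hv.1, hv.2.le⟩
      rw [h1, hF1] at this
      exact absurd this.symm hv.2.ne
    have hGuv : G u = G v := hψinj hGu hGv h
    rw [← hG2 u ⟨hu.1, hu.2.le⟩, ← hG2 v ⟨hv.1, hv.2.le⟩, hGuv]
  · -- Hölder
    intro s hs t ht
    exact hHolder s hs t ht
end
end

section
/- There exists a Lipschitz homeomorphism φ : ∂Ω₁ → ∂Ω₂ that admits no Lipschitz homeomorphic extension to the closures; that is, there is no homeomorphism h : Ω̄₁ → Ω̄₂ that is Lipschitz and satisfies h = φ on ∂Ω₁. -/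
open Set Metric Filter
noncomputable def mk2 (x y : ℝ) : EuclideanSpace ℝ (Fin 2) :=
  (WithLp.equiv 2 (Fin 2 → ℝ)).symm ![x, y]
def SquareSet : Set (EuclideanSpace ℝ (Fin 2)) :=
  {z | z 0 ∈ Set.Ioo (-1:ℝ) 1 ∧ z 1 ∈ Set.Ioo (-1:ℝ) 1}
def Omega1 : Set (EuclideanSpace ℝ (Fin 2)) :=
  SquareSet ∪ {z | 1 ≤ z 0 ∧ z 0 < 2 ∧ |z 1| < (2 - z 0) ^ 2}
def Omega2 : Set (EuclideanSpace ℝ (Fin 2)) :=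
  SquareSet \ {z | 0 ≤ z 0 ∧ z 0 ≤ 1 ∧ |z 1| ≤ (z 0) ^ 2}
abbrev E2 := EuclideanSpace ℝ (Fin 2)
lemma cont0 : Continuous (fun z : E2 => z 0) := (continuous_apply 0).comp (PiLp.continuous_ofLp ..)
lemma cont1 : Continuous (fun z : E2 => z 1) := (continuous_apply 1).comp (PiLp.continuous_ofLp ..)
lemma mk2_zero (a b : ℝ) : mk2 a b 0 = a := by simp [mk2]
lemma mk2_one (a b : ℝ) : mk2 a b 1 = b := by simp [mk2]

lemma isOpen_Omega1 : IsOpen Omega1 := by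
  have hset : Omega1 = {z : E2 | (-1 < z 0 ∧ z 0 < 2 ∧ -1 < z 1 ∧ z 1 < 1) ∧
      (z 0 < 1 ∨ |z 1| < (2 - z 0) ^ 2)} := by
    ext z
    simp only [Omega1, SquareSet, mem_union, mem_setOf_eq, mem_Ioo]
    constructor
    · rintro (⟨⟨h1, h2⟩, h3, h4⟩ | ⟨h1, h2, h3⟩)
      · exact ⟨⟨h1, by linarith, h3, h4⟩, Or.inl h2⟩
      · have hle : (2 - z 0) ^ 2 ≤ 1 := by nlinarith
        have := abs_lt.mp (lt_of_lt_of_le h3 hle)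
        exact ⟨⟨by linarith, h2, this.1, this.2⟩, Or.inr h3⟩
    · rintro ⟨⟨h1, h2, h3, h4⟩, h5 | h5⟩
      · exact Or.inl ⟨⟨h1, h5⟩, h3, h4⟩
      · rcases lt_or_ge (z 0) 1 with h | h
        · exact Or.inl ⟨⟨h1, h⟩, h3, h4⟩
        · exact Or.inr ⟨h, h2, h5⟩
  rw [hset]
  apply IsOpen.inter
  · exact IsOpen.inter (isOpen_lt continuous_const cont0) <| IsOpen.inter
      (isOpen_lt cont0 continuous_const) <| IsOpen.inter
      (isOpen_lt continuous_const cont1) (isOpen_lt cont1 continuous_const)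
  · exact IsOpen.union (isOpen_lt cont0 continuous_const)
      (isOpen_lt (continuous_abs.comp cont1)
        (((continuous_const.sub cont0).pow 2)))

lemma isOpen_Omega2 : IsOpen Omega2 := by
  apply IsOpen.sdiff
  · exact IsOpen.inter
      ((isOpen_Ioo).preimage cont0) ((isOpen_Ioo).preimage cont1)
  · refine IsClosed.inter (isClosed_le continuous_const cont0) <| IsClosed.inter
      (isClosed_le cont0 continuous_const)
      (isClosed_le (continuous_abs.comp cont1) ((cont0).pow 2))

lemma mem_closure_scale (S : Set E2) (c z : E2)
    (h : ∀ s : ℝ, s ∈ Set.Ioo (0:ℝ) 1 → c + s • (z - c) ∈ S) : z ∈ closure S := by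
  have htend : Tendsto (fun s : ℝ => c + s • (z - c)) (nhdsWithin 1 (Set.Iio 1)) (nhds z) := by
    have hc : Continuous (fun s : ℝ => c + s • (z - c)) :=
      continuous_const.add (continuous_id.smul continuous_const)
    have := hc.tendsto 1
    simp only [one_smul, add_sub_cancel] at this
    exact this.mono_left nhdsWithin_le_nhds
  refine mem_closure_of_tendsto htend ?_
  filter_upwards [Ioo_mem_nhdsLT_of_mem (by constructor <;> norm_num : (1:ℝ) ∈ Set.Ioc 0 1)]
    with s hs using h s hs

def C1 : Set E2 := {z | (-1 ≤ z 0 ∧ z 0 ≤ 1 ∧ |z 1| ≤ 1) ∨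
    (1 ≤ z 0 ∧ z 0 ≤ 2 ∧ |z 1| ≤ (2 - z 0) ^ 2)}
def C2 : Set E2 := {z | -1 ≤ z 0 ∧ z 0 ≤ 1 ∧ |z 1| ≤ 1 ∧ (z 0 ≤ 0 ∨ (z 0)^2 ≤ |z 1|)}

lemma isClosed_C1 : IsClosed C1 := by
  apply IsClosed.union
  · exact IsClosed.inter (isClosed_le continuous_const cont0) <| IsClosed.inter
      (isClosed_le cont0 continuous_const)
      (isClosed_le (continuous_abs.comp cont1) continuous_const)
  · exact IsClosed.inter (isClosed_le continuous_const cont0) <| IsClosed.inter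
      (isClosed_le cont0 continuous_const)
      (isClosed_le (continuous_abs.comp cont1) ((continuous_const.sub cont0).pow 2))

lemma isClosed_C2 : IsClosed C2 := by
  refine IsClosed.inter (isClosed_le continuous_const cont0) <| IsClosed.inter
      (isClosed_le cont0 continuous_const) <| IsClosed.inter
      (isClosed_le (continuous_abs.comp cont1) continuous_const) ?_
  exact IsClosed.union (isClosed_le cont0 continuous_const)
    (isClosed_le ((cont0).pow 2) (continuous_abs.comp cont1))

lemma coord_scale (s : ℝ) (z c : E2) (i : Fin 2) :
    (c + s • (z - c)) i = c i + s * (z i - c i) := rfl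

lemma closure_Omega1 : closure Omega1 = C1 := by
  apply Subset.antisymm
  · apply closure_minimal _ isClosed_C1
    rintro z (⟨⟨h1, h2⟩, h3, h4⟩ | ⟨h1, h2, h3⟩)
    · exact Or.inl ⟨le_of_lt h1, le_of_lt h2, abs_le.mpr ⟨le_of_lt h3, le_of_lt h4⟩⟩
    · exact Or.inr ⟨h1, le_of_lt h2, le_of_lt h3⟩
  · intro z hz
    apply mem_closure_scale Omega1 0 z
    intro s hs
    obtain ⟨hs0, hs1⟩ := hs
    simp only [Omega1, SquareSet, mem_union, mem_setOf_eq, mem_Ioo, coord_scale]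
    simp only [show ∀ i : Fin 2, (0:E2) i = 0 from fun i => rfl, zero_add, sub_zero]
    rcases hz with ⟨h1, h2, h3⟩ | ⟨h1, h2, h3⟩
    · left
      have := abs_le.mp h3
      refine ⟨⟨by nlinarith, by nlinarith⟩, by nlinarith, by nlinarith⟩
    · have hz1u := (abs_le.mp h3).2
      have hz1l := (abs_le.mp h3).1
      have h2z : (2 - z 0) ^ 2 ≤ 1 := by nlinarith
      rcases lt_or_ge (s * z 0) 1 with hc | hc
      · left
        refine ⟨⟨by nlinarith, hc⟩, by nlinarith, by nlinarith⟩
      · right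
        refine ⟨hc, by nlinarith, ?_⟩
        rw [abs_mul, abs_of_pos hs0]
        have hba : 2 - z 0 < 2 - s * z 0 := by nlinarith
        have hbpos : (0:ℝ) < 2 - s * z 0 := by nlinarith
        have key : (2 - z 0)^2 < (2 - s * z 0)^2 := by nlinarith
        nlinarith [abs_nonneg (z 1)]

lemma closure_Omega2 : closure Omega2 = C2 := by
  apply Subset.antisymm
  · apply closure_minimal _ isClosed_C2
    rintro z ⟨⟨⟨h1, h2⟩, h3, h4⟩, h5⟩
    refine ⟨le_of_lt h1, le_of_lt h2, abs_le.mpr ⟨le_of_lt h3, le_of_lt h4⟩, ?_⟩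
    simp only [mem_setOf_eq, not_and, not_le] at h5
    rcases lt_or_ge (z 0) 0 with h | h
    · exact Or.inl (le_of_lt h)
    · exact Or.inr (le_of_lt (h5 h (le_of_lt h2)))
  · intro z hz
    obtain ⟨h1, h2, h3, h4⟩ := hz
    have habs := abs_le.mp h3
    rcases le_or_gt (z 0) 0 with hneg | hpos
    · apply mem_closure_scale Omega2 (mk2 (-1/2) 0) z
      intro s ⟨hs0, hs1⟩
      simp only [Omega2, SquareSet, mem_diff, mem_setOf_eq, mem_Ioo, coord_scale,
        mk2_zero, mk2_one]
      have hx : -1/2 + s * (z 0 - -1/2) < 0 := by nlinarith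
      refine ⟨⟨⟨by nlinarith, by nlinarith⟩, by nlinarith, by nlinarith⟩, ?_⟩
      push_neg
      intro habs'
      linarith
    · have hz1 : (z 0)^2 ≤ |z 1| := by
        rcases h4 with h | h
        · linarith
        · exact h
      have hz1pos : 0 < |z 1| := lt_of_lt_of_le (by positivity) hz1
      apply mem_closure_scale Omega2 0 z
      intro s ⟨hs0, hs1⟩
      simp only [Omega2, SquareSet, mem_diff, mem_setOf_eq, mem_Ioo, coord_scale]
      simp only [show ∀ i : Fin 2, (0:E2) i = 0 from fun i => rfl, zero_add, sub_zero]
      refine ⟨⟨⟨by nlinarith, by nlinarith⟩, by nlinarith, by nlinarith⟩, ?_⟩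
      push_neg
      intro _ _
      rw [abs_mul, abs_of_pos hs0]
      nlinarith [mul_pos (mul_pos hs0 (sub_pos.mpr hs1)) (mul_pos hpos hpos)]


def F1 : Set E2 := {z | (z 0 = -1 ∧ |z 1| ≤ 1) ∨ (|z 1| = 1 ∧ -1 ≤ z 0 ∧ z 0 ≤ 1) ∨
    (1 ≤ z 0 ∧ z 0 ≤ 2 ∧ |z 1| = (2 - z 0) ^ 2)}
def F2 : Set E2 := {z | (z 0 = -1 ∧ |z 1| ≤ 1) ∨ (|z 1| = 1 ∧ -1 ≤ z 0 ∧ z 0 ≤ 1) ∨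
    (0 ≤ z 0 ∧ z 0 ≤ 1 ∧ |z 1| = (z 0) ^ 2)}

lemma frontier_Omega1 : frontier Omega1 = F1 := by
  rw [frontier, closure_Omega1, isOpen_Omega1.interior_eq]
  ext z
  simp only [C1, F1, Omega1, SquareSet, mem_diff, mem_union, mem_setOf_eq, mem_Ioo]
  constructor
  · rintro ⟨hC, hO⟩
    rcases hC with ⟨h1, h2, h3⟩ | ⟨h1, h2, h3⟩
    · by_cases hz1 : |z 1| = 1
      · exact Or.inr (Or.inl ⟨hz1, h1, h2⟩)
      have hz1' : |z 1| < 1 := lt_of_le_of_ne h3 hz1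
      by_cases hz0 : z 0 = -1
      · exact Or.inl ⟨hz0, h3⟩
      have h1' : -1 < z 0 := lt_of_le_of_ne h1 (Ne.symm hz0)
      have habs := abs_lt.mp hz1'
      by_cases hz0' : z 0 = 1
      · exfalso
        exact hO (Or.inr ⟨le_of_eq hz0'.symm, by rw [hz0']; norm_num, by rw [hz0']; norm_num; exact hz1'⟩)
      · exfalso
        exact hO (Or.inl ⟨⟨h1', lt_of_le_of_ne h2 hz0'⟩, habs.1, habs.2⟩)
    · by_cases he : |z 1| = (2 - z 0) ^ 2
      · exact Or.inr (Or.inr ⟨h1, h2, he⟩)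
      have h3' : |z 1| < (2 - z 0) ^ 2 := lt_of_le_of_ne h3 he
      rcases lt_or_eq_of_le h2 with h2' | h2'
      · exact absurd (Or.inr ⟨h1, h2', h3'⟩) hO
      · exfalso
        rw [h2'] at h3'
        norm_num at h3'
        linarith [abs_nonneg (z 1)]
  · rintro (⟨h1, h2⟩ | ⟨h1, h2, h3⟩ | ⟨h1, h2, h3⟩)
    · refine ⟨Or.inl ⟨le_of_eq h1.symm, by linarith, h2⟩, ?_⟩
      rintro (⟨⟨ha, -⟩, -⟩ | ⟨ha, -⟩) <;> linarith
    · refine ⟨Or.inl ⟨h2, h3, le_of_eq h1⟩, ?_⟩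
      rintro (⟨-, hb, hc⟩ | ⟨ha, hb, hc⟩)
      · have : |z 1| < 1 := abs_lt.mpr ⟨hb, hc⟩
        linarith
      · have hz0 : z 0 = 1 := le_antisymm h3 ha
        rw [hz0] at hc
        norm_num at hc
        linarith
    · refine ⟨Or.inr ⟨h1, h2, le_of_eq h3⟩, ?_⟩
      rintro (⟨⟨-, ha⟩, -⟩ | ⟨-, -, hc⟩) <;> linarith

lemma frontier_Omega2 : frontier Omega2 = F2 := by
  rw [frontier, closure_Omega2, isOpen_Omega2.interior_eq]
  ext z
  simp only [C2, F2, Omega2, SquareSet, mem_diff, mem_setOf_eq, mem_Ioo]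
  constructor
  · rintro ⟨⟨h1, h2, h3, h4⟩, hO⟩
    by_cases hz1 : |z 1| = 1
    · exact Or.inr (Or.inl ⟨hz1, h1, h2⟩)
    have hz1' : |z 1| < 1 := lt_of_le_of_ne h3 hz1
    by_cases hz0 : z 0 = -1
    · exact Or.inl ⟨hz0, h3⟩
    have h1' : -1 < z 0 := lt_of_le_of_ne h1 (Ne.symm hz0)
    have habs := abs_lt.mp hz1'
    by_cases hz0' : z 0 = 1
    · exfalso
      rcases h4 with h | h
      · rw [hz0'] at h; linarith
      · rw [hz0'] at h; norm_num at h; linarith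
    have h2' : z 0 < 1 := lt_of_le_of_ne h2 hz0'
    have hrem : 0 ≤ z 0 ∧ z 0 ≤ 1 ∧ |z 1| ≤ z 0 ^ 2 := by
      by_contra hc
      exact hO ⟨⟨⟨h1', h2'⟩, habs.1, habs.2⟩, hc⟩
    obtain ⟨hr1, hr2, hr3⟩ := hrem
    refine Or.inr (Or.inr ⟨hr1, hr2, ?_⟩)
    rcases h4 with h | h
    · have hz00 : z 0 = 0 := le_antisymm h hr1
      rw [hz00] at hr3 ⊢
      norm_num at hr3 ⊢
      exact hr3
    · exact le_antisymm hr3 h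
  · rintro (⟨h1, h2⟩ | ⟨h1, h2, h3⟩ | ⟨h1, h2, h3⟩)
    · refine ⟨⟨le_of_eq h1.symm, by linarith, h2, Or.inl (by linarith)⟩, ?_⟩
      rintro ⟨⟨⟨ha, -⟩, -⟩, -⟩
      linarith
    · refine ⟨⟨h2, h3, le_of_eq h1, Or.inr (by nlinarith)⟩, ?_⟩
      rintro ⟨⟨-, hb, hc⟩, -⟩
      have : |z 1| < 1 := abs_lt.mpr ⟨hb, hc⟩
      linarith
    · have hsq : z 0 ^ 2 ≤ 1 := by nlinarith
      refine ⟨⟨by linarith, h2, by rw [h3]; exact hsq, Or.inr (le_of_eq h3.symm)⟩, ?_⟩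
      rintro ⟨-, hrem⟩
      exact hrem ⟨h1, h2, le_of_eq h3⟩

lemma ext2 (z w : E2) (h0 : z 0 = w 0) (h1 : z 1 = w 1) : z = w := by
  ext i; fin_cases i <;> assumption

lemma dist_eq2 (z w : E2) :
    dist z w = Real.sqrt ((z 0 - w 0)^2 + (z 1 - w 1)^2) := by
  rw [EuclideanSpace.dist_eq, Fin.sum_univ_two]
  simp [Real.dist_eq, sq_abs]

lemma dist_coord (z w : E2) : |z 0 - w 0| ≤ dist z w := by
  rw [dist_eq2, ← Real.sqrt_sq_eq_abs]
  apply Real.sqrt_le_sqrt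
  nlinarith [sq_nonneg (z 1 - w 1)]

noncomputable def phi (z : E2) : E2 := mk2 (1 - |1 - z 0|) (z 1)

lemma phi_zero (z : E2) : phi z 0 = 1 - |1 - z 0| := by simp [phi, mk2_zero]
lemma phi_one (z : E2) : phi z 1 = z 1 := by simp [phi, mk2_one]

lemma phi_dist (x y : E2) : dist (phi x) (phi y) ≤ dist x y := by
  rw [dist_eq2, dist_eq2 x y, phi_zero, phi_zero, phi_one, phi_one]
  apply Real.sqrt_le_sqrt
  have h1 : |(1 - |1 - x 0|) - (1 - |1 - y 0|)| ≤ |x 0 - y 0| := by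
    have ha := abs_abs_sub_abs_le_abs_sub (1 - y 0) (1 - x 0)
    have hb : |(1 - |1 - x 0|) - (1 - |1 - y 0|)| = |(|1 - y 0|) - (|1 - x 0|)| := by
      rw [show (1 - |1 - x 0|) - (1 - |1 - y 0|) = (|1 - y 0|) - (|1 - x 0|) by ring]
    have hc : |(1 - y 0) - (1 - x 0)| = |x 0 - y 0| := by
      rw [show (1 - y 0) - (1 - x 0) = x 0 - y 0 by ring]
    rw [hb, ← hc]
    exact ha
  have h2 : ((1 - |1 - x 0|) - (1 - |1 - y 0|))^2 ≤ (x 0 - y 0)^2 := by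
    rw [← sq_abs, ← sq_abs (x 0 - y 0)]
    exact pow_le_pow_left₀ (abs_nonneg _) h1 2
  linarith

lemma phi_continuous : Continuous phi :=
  (LipschitzWith.of_dist_le_mul (K := 1) (fun x y => by
    rw [NNReal.coe_one, one_mul]; exact phi_dist x y)).continuous

lemma phi_injOn : Set.InjOn phi F1 := by
  have aux : ∀ z w : E2, z ∈ F1 → w ∈ F1 → z 0 + w 0 = 2 → z 0 < w 0 → z 1 = w 1 → False := by
    rintro z w hz hw hsum hlt h1
    have hw1 : 1 < w 0 := by linarith
    rcases hw with ⟨ha, -⟩ | ⟨-, -, hb⟩ | ⟨ha, hb, hc⟩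
    · linarith
    · linarith
    · rcases hz with ⟨hd, -⟩ | ⟨hd, -, -⟩ | ⟨hd, -, -⟩
      · linarith
      · rw [← h1, hd] at hc
        nlinarith
      · linarith
  intro z hz w hw hzw
  have e0 : phi z 0 = phi w 0 := by rw [hzw]
  have e1 : phi z 1 = phi w 1 := by rw [hzw]
  rw [phi_zero, phi_zero] at e0
  rw [phi_one, phi_one] at e1
  have habs : |1 - z 0| = |1 - w 0| := by linarith
  rcases abs_eq_abs.mp habs with he | he
  · exact ext2 z w (by linarith) e1
  · have hsum : z 0 + w 0 = 2 := by linarith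
    rcases lt_trichotomy (z 0) (w 0) with h | h | h
    · exact (aux z w hz hw hsum h e1).elim
    · exact ext2 z w h e1
    · exact (aux w z hw hz (by linarith) h e1.symm).elim

lemma phi_image : phi '' F1 = F2 := by
  apply Subset.antisymm
  · rintro _ ⟨z, hz, rfl⟩
    simp only [F1, F2, mem_setOf_eq] at hz ⊢
    rw [phi_zero, phi_one]
    rcases hz with ⟨h1, h2⟩ | ⟨h1, h2, h3⟩ | ⟨h1, h2, h3⟩
    · left
      rw [h1]
      norm_num
      exact h2
    · right; left
      refine ⟨h1, ?_, ?_⟩ <;> rw [abs_of_nonneg (by linarith : (0:ℝ) ≤ 1 - z 0)] <;> linarith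
    · right; right
      rw [abs_of_nonpos (by linarith : 1 - z 0 ≤ 0)]
      refine ⟨by linarith, by linarith, ?_⟩
      rw [h3]; ring_nf
  · intro w hw
    simp only [F2, mem_setOf_eq] at hw
    rcases hw with ⟨h1, h2⟩ | ⟨h1, h2, h3⟩ | ⟨h1, h2, h3⟩
    · refine ⟨w, Or.inl ⟨h1, h2⟩, ?_⟩
      apply ext2
      · rw [phi_zero, h1]; norm_num
      · rw [phi_one]
    · refine ⟨w, Or.inr (Or.inl ⟨h1, h2, h3⟩), ?_⟩
      apply ext2
      · rw [phi_zero, abs_of_nonneg (by linarith : (0:ℝ) ≤ 1 - w 0)]; ring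
      · rw [phi_one]
    · refine ⟨mk2 (2 - w 0) (w 1), Or.inr (Or.inr ?_), ?_⟩
      · simp only [F1, mem_setOf_eq, mk2_zero, mk2_one]
        refine ⟨by linarith, by linarith, by rw [h3]; ring_nf⟩
      · apply ext2
        · rw [phi_zero, mk2_zero, abs_of_nonpos (by linarith : 1 - (2 - w 0) ≤ 0)]
          ring
        · rw [phi_one, mk2_one]

/-- There is a Lipschitz homeomorphism `φ : ∂Ω₁ → ∂Ω₂` admitting no
Lipschitz homeomorphic extension `h : Ω̄₁ → Ω̄₂`. -/
theorem no_lipschitz_extension_example :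
    ∃ φ : EuclideanSpace ℝ (Fin 2) → EuclideanSpace ℝ (Fin 2),
      ContinuousOn φ (frontier Omega1) ∧ Set.InjOn φ (frontier Omega1) ∧
      φ '' frontier Omega1 = frontier Omega2 ∧
      (∃ L : ℝ, 0 ≤ L ∧ ∀ x ∈ frontier Omega1, ∀ y ∈ frontier Omega1,
        dist (φ x) (φ y) ≤ L * dist x y) ∧
      ¬ ∃ h : EuclideanSpace ℝ (Fin 2) → EuclideanSpace ℝ (Fin 2),
        ContinuousOn h (closure Omega1) ∧ Set.InjOn h (closure Omega1) ∧
        h '' closure Omega1 = closure Omega2 ∧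
        (∃ L : ℝ, 0 ≤ L ∧ ∀ x ∈ closure Omega1, ∀ y ∈ closure Omega1,
          dist (h x) (h y) ≤ L * dist x y) ∧
        (∀ x ∈ frontier Omega1, h x = φ x) := by
  refine ⟨phi, phi_continuous.continuousOn, ?_, ?_, ⟨1, zero_le_one, ?_⟩, ?_⟩
  · rw [frontier_Omega1]; exact phi_injOn
  · rw [frontier_Omega1, frontier_Omega2]; exact phi_image
  · intro x _ y _; rw [one_mul]; exact phi_dist x y
  · rintro ⟨h, hcont, hinj, himg, ⟨L, hL0, hLip⟩, hbd⟩
    set t : ℝ := 1 / (2 * L + 2) with ht_def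
    have h2L : (0:ℝ) < 2 * L + 2 := by linarith
    have ht0 : 0 < t := by rw [ht_def]; positivity
    have htdef : t * (2 * L + 2) = 1 := by rw [ht_def]; field_simp
    have ht1 : t ≤ 1 := by rw [ht_def, div_le_one h2L]; linarith
    set p : E2 := mk2 (2 - t) (t ^ 2) with hp_def
    set q : E2 := mk2 (2 - t) (-t ^ 2) with hq_def
    have hp0 : p 0 = 2 - t := by rw [hp_def]; exact mk2_zero _ _
    have hp1 : p 1 = t ^ 2 := by rw [hp_def]; exact mk2_one _ _
    have hq0 : q 0 = 2 - t := by rw [hq_def]; exact mk2_zero _ _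
    have hq1 : q 1 = -t ^ 2 := by rw [hq_def]; exact mk2_one _ _
    have hpF : p ∈ frontier Omega1 := by
      rw [frontier_Omega1]
      refine Or.inr (Or.inr ⟨by rw [hp0]; linarith, by rw [hp0]; linarith, ?_⟩)
      rw [hp0, hp1, abs_of_nonneg (sq_nonneg t)]; ring
    have hqF : q ∈ frontier Omega1 := by
      rw [frontier_Omega1]
      refine Or.inr (Or.inr ⟨by rw [hq0]; linarith, by rw [hq0]; linarith, ?_⟩)
      rw [hq0, hq1, abs_neg, abs_of_nonneg (sq_nonneg t)]; ring
    have hhp0 : (h p) 0 = t := by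
      rw [hbd p hpF, phi_zero, hp0, show (1:ℝ) - (2 - t) = t - 1 by ring,
        abs_of_nonpos (by linarith)]
      ring
    have hhp1 : (h p) 1 = t ^ 2 := by rw [hbd p hpF, phi_one, hp1]
    have hhq1 : (h q) 1 = -t ^ 2 := by rw [hbd q hqF, phi_one, hq1]
    set S := segment ℝ p q with hS_def
    have hScoord : ∀ x ∈ S, x 0 = 2 - t ∧ |x 1| ≤ t ^ 2 := by
      rintro x ⟨a, b, ha, hb, hab, rfl⟩
      have c0 : (a • p + b • q) 0 = a * p 0 + b * q 0 := rfl
      have c1 : (a • p + b • q) 1 = a * p 1 + b * q 1 := rfl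
      rw [c0, c1, hp0, hp1, hq0, hq1]
      constructor
      · nlinarith
      · rw [abs_le]; constructor <;> nlinarith
    have hSsub : S ⊆ closure Omega1 := by
      intro x hx
      rw [closure_Omega1]
      obtain ⟨hx0, hx1⟩ := hScoord x hx
      refine Or.inr ⟨by rw [hx0]; linarith, by rw [hx0]; linarith, ?_⟩
      rw [hx0]
      calc |x 1| ≤ t ^ 2 := hx1
        _ = (2 - (2 - t)) ^ 2 := by ring
    have hpS : p ∈ S := left_mem_segment ℝ p q
    have hqS : q ∈ S := right_mem_segment ℝ p q
    have hconn : IsPreconnected (h '' S) :=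
      (convex_segment p q).isPreconnected.image h (hcont.mono hSsub)
    have himgsub : h '' S ⊆ C2 := by
      intro w hw
      rw [← closure_Omega2, ← himg]
      exact image_mono hSsub hw
    have hex : ∃ w ∈ h '' S, w 1 = 0 := by
      by_contra hne
      push_neg at hne
      have hsub : h '' S ⊆ {z : E2 | 0 < z 1} ∪ {z : E2 | z 1 < 0} := by
        intro w hw
        rcases lt_trichotomy (w 1) 0 with hlt | heq | hgt
        · exact Or.inr hlt
        · exact absurd heq (hne w hw)
        · exact Or.inl hgt
      have h1 : (h '' S ∩ {z : E2 | 0 < z 1}).Nonempty :=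
        ⟨h p, mem_image_of_mem h hpS, by
          simp only [mem_setOf_eq, hhp1]; exact pow_pos ht0 2⟩
      have h2 : (h '' S ∩ {z : E2 | z 1 < 0}).Nonempty :=
        ⟨h q, mem_image_of_mem h hqS, by
          simp only [mem_setOf_eq, hhq1]
          have := pow_pos ht0 2; linarith⟩
      obtain ⟨w, -, hw1, hw2⟩ := hconn _ _ (isOpen_lt continuous_const cont1)
        (isOpen_lt cont1 continuous_const) hsub h1 h2
      simp only [mem_setOf_eq] at hw1 hw2
      linarith
    obtain ⟨w, hwS, hw1⟩ := hex
    have hw0 : w 0 ≤ 0 := by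
      obtain ⟨-, -, -, hc⟩ := himgsub hwS
      rcases hc with hcc | hcc
      · exact hcc
      · rw [hw1] at hcc
        norm_num at hcc
        nlinarith [sq_nonneg (w 0)]
    obtain ⟨x, hxS, hxw⟩ := hwS
    have hb1 : t ≤ dist (h p) w := by
      have hd := dist_coord (h p) w
      rw [hhp0] at hd
      have habs : t - w 0 ≤ |t - w 0| := le_abs_self _
      linarith
    have hb2 : dist p x ≤ 2 * t ^ 2 := by
      obtain ⟨hx0, hx1⟩ := hScoord x hxS
      rw [dist_eq2]
      have e0 : p 0 - x 0 = 0 := by rw [hp0, hx0]; ring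
      rw [e0, hp1]
      have : (0:ℝ) ^ 2 + (t ^ 2 - x 1) ^ 2 = (t ^ 2 - x 1) ^ 2 := by ring
      rw [this, Real.sqrt_sq_eq_abs]
      have habs := abs_le.mp hx1
      rw [abs_le]
      constructor <;> linarith [habs.1, habs.2, sq_nonneg t]
    have hb3 : dist (h p) (h x) ≤ L * (2 * t ^ 2) := by
      have := hLip p (frontier_subset_closure hpF) x (hSsub hxS)
      have h2 := mul_le_mul_of_nonneg_left hb2 hL0
      linarith
    rw [hxw] at hb3
    have hfinal : t ≤ L * (2 * t ^ 2) := le_trans hb1 hb3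
    have A := mul_le_mul_of_nonneg_right hfinal h2L.le
    have key : L * (2 * t ^ 2) * (2 * L + 2) = 2 * L * t := by
      have hh : L * (2 * t ^ 2) * (2 * L + 2) = (2 * L * t) * (t * (2 * L + 2)) := by ring
      rw [hh, htdef, mul_one]
    rw [key, htdef] at A
    have expand : t * (2 * L + 2) = 2 * L * t + 2 * t := by ring
    linarith [htdef, A, ht0]
end

section
/- The map φ : ∂Ω₁ → ℝ² defined by φ(x,y) = (x,y) if (x,y) ∈ ∂Ω₁ ∩ ∂((−1,1)²), and φ(x,y) = (2−x, y) otherwise (i.e., on the part of ∂Ω₁ with x ≥ 1), is a Lipschitz homeomorphism from ∂Ω₁ onto ∂Ω₂. -/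
set_option maxHeartbeats 1000000

open Set Metric

open Classical in
/-- The boundary map: identity on `∂Ω₁ ∩ ∂((-1,1)²)`, reflection `x ↦ 2 - x` elsewhere. -/
noncomputable def phiMap (z : EuclideanSpace ℝ (Fin 2)) : EuclideanSpace ℝ (Fin 2) :=
  if z ∈ frontier Omega1 ∩ frontier SquareSet then z else mk2 (2 - z 0) (z 1)

namespace PhiAux

local notation "E" => EuclideanSpace ℝ (Fin 2)

@[simp] lemma mk2_zero (x y : ℝ) : mk2 x y 0 = x := rfl
@[simp] lemma mk2_one (x y : ℝ) : mk2 x y 1 = y := rfl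

lemma mk2_eta (z : E) : mk2 (z 0) (z 1) = z := by
  apply PiLp.ext; intro i; fin_cases i <;> rfl

lemma dist_pair (p q : E) :
    dist p q = Real.sqrt ((p 0 - q 0)^2 + (p 1 - q 1)^2) := by
  rw [EuclideanSpace.dist_eq]
  simp [Fin.sum_univ_two, Real.dist_eq, sq_abs]

lemma dist_le_coords (p q : E) :
    dist p q ≤ |p 0 - q 0| + |p 1 - q 1| := by
  rw [dist_pair]
  have h : (p 0 - q 0)^2 + (p 1 - q 1)^2 ≤ (|p 0 - q 0| + |p 1 - q 1|)^2 := by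
    nlinarith [abs_nonneg (p 0 - q 0), abs_nonneg (p 1 - q 1), sq_abs (p 0 - q 0),
      sq_abs (p 1 - q 1)]
  calc Real.sqrt ((p 0 - q 0)^2 + (p 1 - q 1)^2)
      ≤ Real.sqrt ((|p 0 - q 0| + |p 1 - q 1|)^2) := Real.sqrt_le_sqrt h
    _ = |p 0 - q 0| + |p 1 - q 1| := Real.sqrt_sq (by positivity)

lemma abs0_le_dist (p q : E) : |p 0 - q 0| ≤ dist p q := by
  rw [dist_pair, show |p 0 - q 0| = Real.sqrt ((p 0 - q 0)^2) by rw [Real.sqrt_sq_eq_abs]]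
  exact Real.sqrt_le_sqrt (by nlinarith [sq_nonneg (p 1 - q 1)])

lemma abs1_le_dist (p q : E) : |p 1 - q 1| ≤ dist p q := by
  rw [dist_pair, show |p 1 - q 1| = Real.sqrt ((p 1 - q 1)^2) by rw [Real.sqrt_sq_eq_abs]]
  exact Real.sqrt_le_sqrt (by nlinarith [sq_nonneg (p 0 - q 0)])

lemma dist_mk2_le (z : E) (a b : ℝ) : dist z (mk2 a b) ≤ |z 0 - a| + |z 1 - b| := by
  simpa using dist_le_coords z (mk2 a b)

/-- closed square -/
def CS : Set E := {z | -1 ≤ z 0 ∧ z 0 ≤ 1 ∧ -1 ≤ z 1 ∧ z 1 ≤ 1}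

/-- closure of Omega1 -/
def K1 : Set E := CS ∪ {z | 1 ≤ z 0 ∧ z 0 ≤ 2 ∧ |z 1| ≤ (2 - z 0) ^ 2}

/-- closure of Omega2 -/
def K2 : Set E := CS ∩ {z | z 0 ≤ 0 ∨ (z 0) ^ 2 ≤ |z 1|}

lemma cont0 : Continuous fun z : E => z 0 := PiLp.continuous_apply 2 _ 0
lemma cont1 : Continuous fun z : E => z 1 := PiLp.continuous_apply 2 _ 1

lemma isOpen_sq : IsOpen SquareSet := by
  have h : SquareSet = ({z : E | (-1:ℝ) < z 0} ∩ {z | z 0 < 1}) ∩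
      ({z | (-1:ℝ) < z 1} ∩ {z | z 1 < 1}) := by
    rfl
  rw [h]
  exact (((isOpen_lt continuous_const cont0).inter (isOpen_lt cont0 continuous_const))).inter
    (((isOpen_lt continuous_const cont1).inter (isOpen_lt cont1 continuous_const)))

lemma isOpen_omega1 : IsOpen Omega1 := by
  have h : Omega1 = SquareSet ∪
      ({z : E | 0 < z 0} ∩ ({z | z 0 < 2} ∩
        ({z | |z 1| < (2 - z 0)^2} ∩ {z | |z 1| < 1}))) := by
    ext z
    simp only [Omega1, SquareSet, mem_union, mem_setOf_eq, mem_Ioo, mem_inter_iff]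
    constructor
    · rintro (h | ⟨h1, h2, h3⟩)
      · exact Or.inl h
      · exact Or.inr ⟨by linarith, h2, h3, by nlinarith⟩
    · rintro (h | ⟨h1, h2, h3, h4⟩)
      · exact Or.inl h
      · by_cases h5 : 1 ≤ z 0
        · exact Or.inr ⟨h5, h2, h3⟩
        · have := abs_lt.mp h4
          exact Or.inl ⟨⟨by linarith, by linarith⟩, this.1, this.2⟩
  rw [h]
  exact isOpen_sq.union ((isOpen_lt continuous_const cont0).inter
    ((isOpen_lt cont0 continuous_const).inter
      ((isOpen_lt cont1.abs ((continuous_const.sub cont0).pow 2)).inter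
        (isOpen_lt cont1.abs continuous_const))))

lemma isClosed_cusp : IsClosed {z : E | 0 ≤ z 0 ∧ z 0 ≤ 1 ∧ |z 1| ≤ (z 0) ^ 2} := by
  have h : {z : E | 0 ≤ z 0 ∧ z 0 ≤ 1 ∧ |z 1| ≤ (z 0) ^ 2} =
      {z : E | (0:ℝ) ≤ z 0} ∩ ({z | z 0 ≤ 1} ∩ {z | |z 1| ≤ (z 0)^2}) := rfl
  rw [h]
  exact (isClosed_le continuous_const cont0).inter ((isClosed_le cont0 continuous_const).inter
    (isClosed_le cont1.abs (cont0.pow 2)))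

lemma isOpen_omega2 : IsOpen Omega2 := isOpen_sq.sdiff isClosed_cusp

lemma isClosed_CS : IsClosed CS := by
  have h : CS = {z : E | (-1:ℝ) ≤ z 0} ∩ ({z | z 0 ≤ 1} ∩
      ({z | (-1:ℝ) ≤ z 1} ∩ {z | z 1 ≤ 1})) := rfl
  rw [h]
  exact (isClosed_le continuous_const cont0).inter ((isClosed_le cont0 continuous_const).inter
    ((isClosed_le continuous_const cont1).inter (isClosed_le cont1 continuous_const)))

lemma isClosed_K1 : IsClosed K1 := by
  refine isClosed_CS.union ?_
  have h : {z : E | 1 ≤ z 0 ∧ z 0 ≤ 2 ∧ |z 1| ≤ (2 - z 0) ^ 2} =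
      {z : E | (1:ℝ) ≤ z 0} ∩ ({z | z 0 ≤ 2} ∩ {z | |z 1| ≤ (2 - z 0)^2}) := rfl
  rw [h]
  exact (isClosed_le continuous_const cont0).inter ((isClosed_le cont0 continuous_const).inter
    (isClosed_le cont1.abs ((continuous_const.sub cont0).pow 2)))

lemma isClosed_K2 : IsClosed K2 := by
  refine isClosed_CS.inter ?_
  have h : {z : E | z 0 ≤ 0 ∨ (z 0) ^ 2 ≤ |z 1|} =
      {z : E | z 0 ≤ 0} ∪ {z | (z 0)^2 ≤ |z 1|} := rfl
  rw [h]
  exact (isClosed_le cont0 continuous_const).union (isClosed_le (cont0.pow 2) cont1.abs)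

/-- scaling a closed-square point inward lands in the open square, close by -/
lemma sq_approx {z : E} (h1 : -1 ≤ z 0) (h2 : z 0 ≤ 1) (h3 : -1 ≤ z 1) (h4 : z 1 ≤ 1)
    {ε : ℝ} (hε : 0 < ε) : ∃ b ∈ SquareSet, dist z b < ε := by
  set δ := min (ε/4) (1/2) with hδd
  have hδ0 : 0 < δ := lt_min (by linarith) (by norm_num)
  have hδ1 : δ ≤ ε/4 := min_le_left _ _
  have hδ2 : δ ≤ 1/2 := min_le_right _ _
  refine ⟨mk2 ((1-δ) * z 0) ((1-δ) * z 1), ?_, ?_⟩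
  · constructor <;> simp only [mk2_zero, mk2_one, mem_Ioo] <;>
      constructor <;> nlinarith
  · have hd := dist_mk2_le z ((1-δ) * z 0) ((1-δ) * z 1)
    have e0 : |z 0 - (1-δ) * z 0| ≤ δ := by
      rw [abs_le]; constructor <;> nlinarith
    have e1 : |z 1 - (1-δ) * z 1| ≤ δ := by
      rw [abs_le]; constructor <;> nlinarith
    linarith

lemma closure_sq : closure SquareSet = CS := by
  apply Subset.antisymm
  · apply closure_minimal _ isClosed_CS
    rintro z ⟨⟨a1, a2⟩, a3, a4⟩
    exact ⟨a1.le, a2.le, a3.le, a4.le⟩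
  · rintro z ⟨h1, h2, h3, h4⟩
    rw [Metric.mem_closure_iff]
    intro ε hε
    exact sq_approx h1 h2 h3 h4 hε

lemma closure_omega1 : closure Omega1 = K1 := by
  apply Subset.antisymm
  · apply closure_minimal _ isClosed_K1
    rintro z (h | ⟨h1, h2, h3⟩)
    · exact Or.inl ⟨h.1.1.le, h.1.2.le, h.2.1.le, h.2.2.le⟩
    · exact Or.inr ⟨h1, h2.le, h3.le⟩
  · rintro z (⟨h1, h2, h3, h4⟩ | ⟨h1, h2, h3⟩)
    · exact closure_mono subset_union_left
        (by rw [closure_sq]; exact ⟨h1, h2, h3, h4⟩)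
    · rw [Metric.mem_closure_iff]
      intro ε hε
      rcases eq_or_lt_of_le h1 with he | hlt
      · -- z 0 = 1, |z 1| ≤ 1 : approximate from the square
        have hy : |z 1| ≤ 1 := by nlinarith
        have hy' := abs_le.mp hy
        obtain ⟨b, hb, hd⟩ := sq_approx (by linarith [he]) (le_of_eq he.symm) hy'.1 hy'.2 hε
        exact ⟨b, Or.inl hb, hd⟩
      · -- 1 < z 0 : move left along the cusp
        set δ := min (ε/2) ((z 0 - 1)/2) with hδd
        have hδ0 : 0 < δ := lt_min (by linarith) (by linarith)
        have hδ1 : δ ≤ ε/2 := min_le_left _ _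
        have hδ2 : δ ≤ (z 0 - 1)/2 := min_le_right _ _
        refine ⟨mk2 (z 0 - δ) (z 1), Or.inr ⟨by simp only [mk2_zero]; linarith,
          by simp only [mk2_zero]; linarith, ?_⟩, ?_⟩
        · simp only [mk2_zero, mk2_one]
          nlinarith
        · have hd := dist_mk2_le z (z 0 - δ) (z 1)
          have e0 : |z 0 - (z 0 - δ)| = δ := by
            rw [show z 0 - (z 0 - δ) = δ by ring, abs_of_pos hδ0]
          simp only [sub_self, abs_zero] at hd
          rw [e0] at hd
          linarith

lemma closure_omega2 : closure Omega2 = K2 := by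
  apply Subset.antisymm
  · apply closure_minimal _ isClosed_K2
    rintro z ⟨⟨⟨a1, a2⟩, a3, a4⟩, hns⟩
    refine ⟨⟨a1.le, a2.le, a3.le, a4.le⟩, ?_⟩
    simp only [mem_setOf_eq, not_and, not_le] at hns
    by_cases hx : z 0 ≤ 0
    · exact Or.inl hx
    · exact Or.inr (hns (by linarith) (by linarith)).le
  · rintro z ⟨⟨h1, h2, h3, h4⟩, hor⟩
    rw [Metric.mem_closure_iff]
    intro ε hε
    by_cases hx : z 0 ≤ 0
    · -- shift left and shrink
      set δ := min (ε/6) (1/2) with hδd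
      have hδ0 : 0 < δ := lt_min (by linarith) (by norm_num)
      have hδ1 : δ ≤ ε/6 := min_le_left _ _
      have hδ2 : δ ≤ 1/2 := min_le_right _ _
      refine ⟨mk2 ((1-δ) * z 0 - δ/2) ((1-δ) * z 1), ⟨?_, ?_⟩, ?_⟩
      · constructor <;> simp only [mk2_zero, mk2_one, mem_Ioo] <;>
          constructor <;> nlinarith
      · simp only [mem_setOf_eq, mk2_zero, mk2_one, not_and, not_le]
        intro habs
        exfalso; nlinarith
      · have hd := dist_mk2_le z ((1-δ) * z 0 - δ/2) ((1-δ) * z 1)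
        have e0 : |z 0 - ((1-δ) * z 0 - δ/2)| ≤ 3*δ/2 := by
          rw [abs_le]; constructor <;> nlinarith
        have e1 : |z 1 - (1-δ) * z 1| ≤ δ := by
          rw [abs_le]; constructor <;> nlinarith
        linarith
    · -- 0 < z 0 and z0² ≤ |z1| : shrink toward origin
      have hx' : 0 < z 0 := not_le.mp hx
      have hsq : (z 0)^2 ≤ |z 1| := hor.resolve_left hx
      set δ := min (ε/4) (1/2) with hδd
      have hδ0 : 0 < δ := lt_min (by linarith) (by norm_num)
      have hδ1 : δ ≤ ε/4 := min_le_left _ _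
      have hδ2 : δ ≤ 1/2 := min_le_right _ _
      have habs : |(1-δ) * z 1| = (1-δ) * |z 1| := by
        rw [abs_mul, abs_of_nonneg (by linarith : (0:ℝ) ≤ 1 - δ)]
      refine ⟨mk2 ((1-δ) * z 0) ((1-δ) * z 1), ⟨?_, ?_⟩, ?_⟩
      · constructor <;> simp only [mk2_zero, mk2_one, mem_Ioo] <;>
          constructor <;> nlinarith
      · simp only [mem_setOf_eq, mk2_zero, mk2_one, not_and, not_le]
        intro _ _
        rw [habs]
        have hpos : (0:ℝ) < 1 - δ := by linarith
        have k1 : (1-δ) * (z 0^2) ≤ (1-δ) * |z 1| := by nlinarith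
        have k2 : ((1-δ) * z 0)^2 = (1-δ)^2 * z 0^2 := by ring
        nlinarith [mul_pos (mul_pos hδ0 hpos) (mul_pos hx' hx')]
      · have hd := dist_mk2_le z ((1-δ) * z 0) ((1-δ) * z 1)
        have e0 : |z 0 - (1-δ) * z 0| ≤ δ := by
          rw [abs_le]; constructor <;> nlinarith
        have e1 : |z 1 - (1-δ) * z 1| ≤ δ := by
          rw [abs_le]; constructor <;> nlinarith
        linarith

lemma frontier_sq : frontier SquareSet = CS \ SquareSet := by
  rw [isOpen_sq.frontier_eq, closure_sq]

lemma frontier_omega1 : frontier Omega1 = K1 \ Omega1 := by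
  rw [isOpen_omega1.frontier_eq, closure_omega1]

lemma frontier_omega2 : frontier Omega2 = K2 \ Omega2 := by
  rw [isOpen_omega2.frontier_eq, closure_omega2]

/-- facts on the square part of ∂Ω₁ -/
lemma hA {z : E} (hz : z ∈ frontier Omega1) (hs : z ∈ frontier SquareSet) :
    (-1 ≤ z 0 ∧ z 0 ≤ 1 ∧ -1 ≤ z 1 ∧ z 1 ≤ 1) ∧ z ∉ SquareSet ∧
      (z 0 = 1 → 1 ≤ |z 1|) := by
  rw [frontier_sq] at hs
  rw [frontier_omega1] at hz
  refine ⟨hs.1, hs.2, fun h1 => ?_⟩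
  by_contra hlt
  exact hz.2 (Or.inr ⟨le_of_eq h1.symm, by linarith, by rw [h1]; norm_num; linarith [not_le.mp hlt]⟩)

/-- facts on the cusp part of ∂Ω₁ -/
lemma hB {z : E} (hz : z ∈ frontier Omega1) (hs : z ∉ frontier SquareSet) :
    1 < z 0 ∧ z 0 ≤ 2 ∧ |z 1| = (2 - z 0) ^ 2 := by
  rw [frontier_sq] at hs
  rw [frontier_omega1] at hz
  obtain ⟨hK, hno⟩ := hz
  have hnsq : z ∉ SquareSet := fun h => hno (Or.inl h)
  rcases hK with hcs | ⟨h1, h2, h3⟩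
  · exact absurd ⟨hcs, hnsq⟩ hs
  · have heq : |z 1| = (2 - z 0) ^ 2 := by
      rcases eq_or_lt_of_le h2 with he | hlt
      · have h2z : (2 - z 0)^2 = 0 := by rw [← he]; ring
        have hz0 : |z 1| = 0 := le_antisymm (h2z ▸ h3) (abs_nonneg _)
        rw [hz0, h2z]
      · rcases eq_or_lt_of_le h3 with he2 | hlt2
        · exact he2
        · exact absurd (Or.inr ⟨h1, hlt, hlt2⟩) hno
    refine ⟨?_, h2, heq⟩
    rcases eq_or_lt_of_le h1 with he | hlt
    · exfalso
      have hy : |z 1| = 1 := by rw [heq, ← he]; norm_num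
      have hy' := abs_le.mp hy.le
      exact hs ⟨⟨by linarith [he], le_of_eq he.symm, hy'.1, hy'.2⟩, hnsq⟩
    · exact hlt

theorem main :
    ContinuousOn phiMap (frontier Omega1) ∧ Set.InjOn phiMap (frontier Omega1) ∧
      phiMap '' frontier Omega1 = frontier Omega2 ∧
      (∃ L : ℝ, 0 ≤ L ∧ ∀ x ∈ frontier Omega1, ∀ y ∈ frontier Omega1,
        dist (phiMap x) (phiMap y) ≤ L * dist x y) := by
  classical
  -- the Lipschitz bound, proved first
  have key : ∀ p ∈ frontier Omega1, ∀ q ∈ frontier Omega1,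
      dist (phiMap p) (phiMap q) ≤ 4 * dist p q := by
    intro p hp q hq
    have hd0 := abs0_le_dist p q
    have hd1 := abs1_le_dist p q
    have hd0' := abs_le.mp hd0
    have hd1' := abs_le.mp hd1
    have hdn := dist_nonneg (x := p) (y := q)
    by_cases hp' : p ∈ frontier Omega1 ∩ frontier SquareSet <;>
      by_cases hq' : q ∈ frontier Omega1 ∩ frontier SquareSet
    · rw [phiMap, phiMap, if_pos hp', if_pos hq']; linarith
    · rw [phiMap, phiMap, if_pos hp', if_neg hq']
      have hpA := hA hp hp'.2
      have hqB := hB hq (fun h => hq' ⟨hq, h⟩)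
      have := dist_mk2_le p (2 - q 0) (q 1)
      have e0 : |p 0 - (2 - q 0)| ≤ 3 * dist p q := by
        rw [abs_le]
        constructor <;> [skip; skip] <;>
          · have h1 := hpA.1.2.1
            have h2 := hqB.1
            linarith [hd0'.1, hd0'.2]
      linarith
    · rw [phiMap, phiMap, if_neg hp', if_pos hq']
      have hqA := hA hq hq'.2
      have hpB := hB hp (fun h => hp' ⟨hp, h⟩)
      have hsymm : dist (mk2 (2 - p 0) (p 1)) q = dist q (mk2 (2 - p 0) (p 1)) := dist_comm _ _
      rw [hsymm]
      have := dist_mk2_le q (2 - p 0) (p 1)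
      have e0 : |q 0 - (2 - p 0)| ≤ 3 * dist p q := by
        rw [abs_le]
        constructor <;>
          · have h1 := hqA.1.2.1
            have h2 := hpB.1
            linarith [hd0'.1, hd0'.2]
      have e1 : |q 1 - p 1| ≤ dist p q := by rw [abs_sub_comm]; exact hd1
      linarith
    · rw [phiMap, phiMap, if_neg hp', if_neg hq']
      have := dist_mk2_le (mk2 (2 - p 0) (p 1)) (2 - q 0) (q 1)
      simp only [mk2_zero, mk2_one] at this
      have e0 : |2 - p 0 - (2 - q 0)| = |p 0 - q 0| := by
        rw [show 2 - p 0 - (2 - q 0) = -(p 0 - q 0) by ring, abs_neg]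
      rw [e0] at this
      linarith
  refine ⟨?_, ?_, ?_, 4, by norm_num, key⟩
  · -- continuity
    rw [Metric.continuousOn_iff]
    intro b hb ε hε
    refine ⟨ε/4, by linarith, fun a ha hab => ?_⟩
    have := key a ha b hb
    linarith
  · -- injectivity
    intro p hp q hq h
    by_cases hp' : p ∈ frontier Omega1 ∩ frontier SquareSet <;>
      by_cases hq' : q ∈ frontier Omega1 ∩ frontier SquareSet
    · rwa [phiMap, phiMap, if_pos hp', if_pos hq'] at h
    · exfalso
      rw [phiMap, phiMap, if_pos hp', if_neg hq'] at h
      have hpA := hA hp hp'.2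
      have hqB := hB hq (fun hh => hq' ⟨hq, hh⟩)
      have h0 : p 0 = 2 - q 0 := by rw [h]; rfl
      have h1 : p 1 = q 1 := by rw [h]; rfl
      have hy := abs_le.mp hqB.2.2.le
      refine hpA.2.1 ⟨⟨?_, ?_⟩, ?_, ?_⟩ <;> simp only [mem_Ioo, h0, h1] <;> nlinarith [hqB.1, hqB.2.1, hqB.2.2, abs_nonneg (q 1), abs_le.mp (le_of_eq hqB.2.2)]
    · exfalso
      rw [phiMap, phiMap, if_neg hp', if_pos hq'] at h
      have hqA := hA hq hq'.2
      have hpB := hB hp (fun hh => hp' ⟨hp, hh⟩)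
      have h0 : q 0 = 2 - p 0 := by rw [← h]; rfl
      have h1 : q 1 = p 1 := by rw [← h]; rfl
      refine hqA.2.1 ⟨⟨?_, ?_⟩, ?_, ?_⟩ <;> simp only [mem_Ioo, h0, h1] <;> nlinarith [hpB.1, hpB.2.1, hpB.2.2, abs_nonneg (p 1), abs_le.mp (le_of_eq hpB.2.2)]
    · rw [phiMap, phiMap, if_neg hp', if_neg hq'] at h
      have h0 : (2 : ℝ) - p 0 = 2 - q 0 := by
        have := congrArg (fun w : E => w 0) h; simpa using this
      have h1 : p 1 = q 1 := by
        have := congrArg (fun w : E => w 1) h; simpa using this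
      rw [← mk2_eta p, ← mk2_eta q, h1, show p 0 = q 0 by linarith]
  · -- image
    ext w
    constructor
    · rintro ⟨z, hz, rfl⟩
      rw [frontier_omega2]
      by_cases hs : z ∈ frontier Omega1 ∩ frontier SquareSet
      · rw [phiMap, if_pos hs]
        have hzA := hA hz hs.2
        obtain ⟨⟨b1, b2, b3, b4⟩, hnsq, hone⟩ := hzA
        refine ⟨⟨⟨b1, b2, b3, b4⟩, ?_⟩, fun hmem => hnsq hmem.1⟩
        -- need z0 ≤ 0 ∨ z0² ≤ |z1|
        by_cases hy1 : |z 1| = 1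
        · right; nlinarith
        · have hy1' : |z 1| < 1 := lt_of_le_of_ne (abs_le.mpr ⟨b3, b4⟩) hy1
          have hy2 := abs_lt.mp hy1'
          -- z ∉ Sq so z0 = ±1
          simp only [SquareSet, mem_setOf_eq, mem_Ioo, not_and, not_lt] at hnsq
          by_cases hx1 : z 0 = 1
          · exact absurd (hone hx1) (not_le.mpr hy1')
          · -- must be z0 = -1
            left
            rcases lt_or_eq_of_le b1 with hb | hb
            · exfalso
              rcases lt_or_eq_of_le b2 with hb2 | hb2
              · have := hnsq ⟨hb, hb2⟩ hy2.1; linarith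
              · exact hx1 hb2
            · linarith [hb]
      · rw [phiMap, if_neg hs]
        have hzB := hB hz (fun h => hs ⟨hz, h⟩)
        obtain ⟨c1, c2, c3⟩ := hzB
        have hy := abs_le.mp (le_of_eq c3)
        constructor
        · refine ⟨⟨?_, ?_, ?_, ?_⟩, Or.inr ?_⟩ <;> simp only [mk2_zero, mk2_one] <;> nlinarith
        · intro hmem
          exact hmem.2 ⟨show (0:ℝ) ≤ 2 - z 0 by linarith,
            show (2:ℝ) - z 0 ≤ 1 by linarith,
            show |z 1| ≤ (2 - z 0)^2 from le_of_eq c3⟩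
    · intro hw
      rw [frontier_omega2] at hw
      obtain ⟨⟨⟨b1, b2, b3, b4⟩, hor⟩, hno2⟩ := hw
      by_cases hsq : w ∈ SquareSet
      · -- w is on the inner cusp curve: |w1| = w0², 0 ≤ w0 < 1
        have hcusp : 0 ≤ w 0 ∧ w 0 ≤ 1 ∧ |w 1| ≤ (w 0)^2 := by
          by_contra hc
          exact hno2 ⟨hsq, hc⟩
        have heq : |w 1| = (w 0)^2 := by
          rcases hor with hx | hx
          · have h0 : w 0 = 0 := le_antisymm hx hcusp.1
            have hle : |w 1| ≤ 0 := by
              have := hcusp.2.2; rw [h0] at this; simpa using this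
            have hz : |w 1| = 0 := le_antisymm hle (abs_nonneg _)
            rw [hz, h0]; norm_num
          · exact le_antisymm hcusp.2.2 hx
        have hx1 : w 0 < 1 := hsq.1.2
        have hx0 : 0 ≤ w 0 := hcusp.1
        refine ⟨mk2 (2 - w 0) (w 1), ?_, ?_⟩
        · rw [frontier_omega1]
          constructor
          · right
            refine ⟨?_, ?_, ?_⟩ <;> simp only [mk2_zero, mk2_one] <;> [linarith; linarith; skip]
            rw [show (2 : ℝ) - (2 - w 0) = w 0 by ring]
            exact le_of_eq heq
          · simp only [Omega1, SquareSet, mem_union, mem_setOf_eq, mem_Ioo, mk2_zero, mk2_one,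
              not_or, not_and, not_lt]
            constructor
            · intro h; exfalso; linarith [h.2]
            · intro _ _
              rw [show (2 : ℝ) - (2 - w 0) = w 0 by ring]
              exact le_of_eq heq.symm
        · have hne : mk2 (2 - w 0) (w 1) ∉ frontier Omega1 ∩ frontier SquareSet := by
            rintro ⟨-, hfs⟩
            rw [frontier_sq] at hfs
            have := hfs.1.2.1
            simp only [mk2_zero] at this
            linarith
          rw [phiMap, if_neg hne]
          simp only [mk2_zero, mk2_one]
          rw [show (2 : ℝ) - (2 - w 0) = w 0 by ring, mk2_eta]
      · -- w is on the boundary of the square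
        have hfs : w ∈ frontier SquareSet := by
          rw [frontier_sq]; exact ⟨⟨b1, b2, b3, b4⟩, hsq⟩
        have hf1 : w ∈ frontier Omega1 := by
          rw [frontier_omega1]
          refine ⟨Or.inl ⟨b1, b2, b3, b4⟩, ?_⟩
          rintro (h | ⟨h1, h2, h3⟩)
          · exact hsq h
          · have hx1 : w 0 = 1 := le_antisymm b2 h1
            rcases hor with hx | hx
            · linarith
            · rw [hx1] at hx h3
              norm_num at hx h3
              linarith
        exact ⟨w, hf1, by rw [phiMap, if_pos ⟨hf1, hfs⟩]⟩

end PhiAux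

/-- `phiMap` is a Lipschitz homeomorphism from `∂Ω₁` onto `∂Ω₂`. -/
theorem phiMap_lipschitz_homeo :
    ContinuousOn phiMap (frontier Omega1) ∧ Set.InjOn phiMap (frontier Omega1) ∧
      phiMap '' frontier Omega1 = frontier Omega2 ∧
      (∃ L : ℝ, 0 ≤ L ∧ ∀ x ∈ frontier Omega1, ∀ y ∈ frontier Omega1,
        dist (phiMap x) (phiMap y) ≤ L * dist x y) := by
  exact PhiAux.main
end

section
/- For every t ∈ (0,1), every continuous path γ : [0,1] → Ω̄₂ with γ(0) = (t, t²) and γ(1) = (t, −t²) has length (total variation) at least 2√(t² + t⁴). -/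
open Set Metric ENNReal

lemma mk2_apply_zero (x y : ℝ) : mk2 x y 0 = x := rfl
lemma mk2_apply_one (x y : ℝ) : mk2 x y 1 = y := rfl

/-- Points of `closure Omega2` with second coordinate zero have first coordinate `≤ 0`. -/
lemma closure_omega2_yzero {z : EuclideanSpace ℝ (Fin 2)}
    (hz : z ∈ closure Omega2) (hy : z 1 = 0) : z 0 ≤ 0 := by
  set U : Set (EuclideanSpace ℝ (Fin 2)) := {w | 0 < w 0 ∧ |w 1| < (w 0) ^ 2} with hUdef
  have cont0 : Continuous fun w : EuclideanSpace ℝ (Fin 2) => w 0 :=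
    (EuclideanSpace.proj (0 : Fin 2)).continuous
  have cont1 : Continuous fun w : EuclideanSpace ℝ (Fin 2) => w 1 :=
    (EuclideanSpace.proj (1 : Fin 2)).continuous
  have hU : IsOpen U :=
    (isOpen_lt continuous_const cont0).inter
      (isOpen_lt (_root_.continuous_abs.comp cont1) (cont0.pow 2))
  have hsub : Omega2 ⊆ Uᶜ := by
    rintro w ⟨⟨hx, _⟩, hnot⟩ ⟨hw0, hw1⟩
    exact hnot ⟨le_of_lt hw0, le_of_lt hx.2, le_of_lt hw1⟩
  have hzU : z ∉ U := fun h =>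
    (closure_minimal hsub hU.isClosed_compl hz) h
  by_contra hx
  push_neg at hx
  exact hzU ⟨hx, by rw [hy]; simpa using pow_pos hx 2⟩

/-- Any continuous path in `Ω̄₂` joining `(t, t²)` to `(t, -t²)` has
length at least `2√(t² + t⁴)`. -/
theorem path_length_lower_bound (t : ℝ) (ht : t ∈ Set.Ioo (0:ℝ) 1)
    (γ : ℝ → EuclideanSpace ℝ (Fin 2))
    (hγ : ContinuousOn γ (Set.Icc 0 1))
    (hmem : ∀ s ∈ Set.Icc (0:ℝ) 1, γ s ∈ closure Omega2)
    (h0 : γ 0 = mk2 t (t ^ 2)) (h1 : γ 1 = mk2 t (-(t ^ 2))) :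
    ENNReal.ofReal (2 * Real.sqrt (t ^ 2 + t ^ 4)) ≤ eVariationOn γ (Set.Icc 0 1) := by
  obtain ⟨ht0, ht1⟩ := ht
  -- the second coordinate of the path
  have hcont1 : ContinuousOn (fun s => γ s 1) (Set.Icc 0 1) :=
    (EuclideanSpace.proj (1 : Fin 2)).continuous.comp_continuousOn hγ
  -- intermediate value: some point where the second coordinate vanishes
  have hmemI : (0:ℝ) ∈ Set.Icc ((fun s => γ s 1) 1) ((fun s => γ s 1) 0) := by
    simp only [h0, h1, mk2_apply_one]
    constructor <;> nlinarith
  obtain ⟨s, hs, hγs1⟩ :=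
    intermediate_value_Icc' (by norm_num : (0:ℝ) ≤ 1) hcont1 hmemI
  have hγs0 : γ s 0 ≤ 0 := closure_omega2_yzero (hmem s hs) hγs1
  -- distance lower bounds
  have hA : (0:ℝ) ≤ t ^ 2 + t ^ 4 := by positivity
  have key : ∀ z : EuclideanSpace ℝ (Fin 2), z 1 = 0 → z 0 ≤ 0 → ∀ u : ℝ,
      u ^ 2 = t ^ 4 → Real.sqrt (t ^ 2 + t ^ 4) ≤ dist (mk2 t u) z := by
    intro z hz1 hz0 u hu
    rw [EuclideanSpace.dist_eq]
    apply Real.sqrt_le_sqrt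
    rw [Fin.sum_univ_two, mk2_apply_zero, mk2_apply_one, hz1, Real.dist_eq, Real.dist_eq,
      sq_abs, sq_abs]
    nlinarith [sq_nonneg (z 0)]
  have hd0 : Real.sqrt (t ^ 2 + t ^ 4) ≤ dist (γ 0) (γ s) := by
    rw [h0]; exact key _ hγs1 hγs0 _ (by ring)
  have hd1 : Real.sqrt (t ^ 2 + t ^ 4) ≤ dist (γ s) (γ 1) := by
    rw [dist_comm, h1]; exact key _ hγs1 hγs0 _ (by ring)
  -- lower bound on variation
  have hvar : edist (γ 0) (γ s) + edist (γ s) (γ 1) ≤ eVariationOn γ (Set.Icc 0 1) := by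
    have h1' : edist (γ 0) (γ s) ≤ eVariationOn γ (Set.Icc 0 s) :=
      eVariationOn.edist_le γ (Set.left_mem_Icc.2 hs.1) (Set.right_mem_Icc.2 hs.1)
    have h2' : edist (γ s) (γ 1) ≤ eVariationOn γ (Set.Icc s 1) :=
      eVariationOn.edist_le γ (Set.left_mem_Icc.2 hs.2) (Set.right_mem_Icc.2 hs.2)
    calc edist (γ 0) (γ s) + edist (γ s) (γ 1)
        ≤ eVariationOn γ (Set.Icc 0 s) + eVariationOn γ (Set.Icc s 1) := add_le_add h1' h2'
      _ ≤ eVariationOn γ (Set.Icc 0 s ∪ Set.Icc s 1) :=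
          eVariationOn.add_le_union γ (fun x hx y hy => hx.2.trans hy.1)
      _ ≤ eVariationOn γ (Set.Icc 0 1) := by
          apply eVariationOn.mono
          rintro x (hx | hx)
          · exact ⟨hx.1, hx.2.trans hs.2⟩
          · exact ⟨hs.1.trans hx.1, hx.2⟩
  refine le_trans ?_ hvar
  rw [edist_dist, edist_dist, ← ENNReal.ofReal_add dist_nonneg dist_nonneg]
  apply ENNReal.ofReal_le_ofReal
  linarith
end

section
/- Let Y ⊂ ℝ² be a Jordan domain. Call a point ω ∈ ∂Y a good point if there exists z ∈ ℝ², z ≠ ω, such that the half-open line segment {(1−s)ω + s z : s ∈ (0,1]} is contained in Y. Then for every ω ∈ ∂Y and every ε > 0 there exists a good point ω' ∈ ∂Y with |ω − ω'| < ε. -/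
open Set Metric

/-- `ω` is a good point of the Jordan domain `Y` if some nondegenerate half-open
segment emanating from `ω` lies entirely inside `Y`. -/
def GoodPoint (Y : Set (EuclideanSpace ℝ (Fin 2))) (ω : EuclideanSpace ℝ (Fin 2)) : Prop :=
  ∃ z : EuclideanSpace ℝ (Fin 2), z ≠ ω ∧
    ∀ s ∈ Set.Ioc (0:ℝ) 1, ((1 - s) • ω + s • z) ∈ Y

/-- In a Jordan domain `Y` (the bounded connected component of the
complement of a Jordan curve `Γ`), good points are dense in the boundary `∂Y`. -/
theorem good_points_dense (Γ Y : Set (EuclideanSpace ℝ (Fin 2)))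
    (hJordan : ∃ g : EuclideanSpace ℝ (Fin 2) → EuclideanSpace ℝ (Fin 2),
      ContinuousOn g (Metric.sphere 0 1) ∧ Set.InjOn g (Metric.sphere 0 1) ∧
      g '' Metric.sphere 0 1 = Γ)
    (hY : ∃ x ∈ Γᶜ, Y = connectedComponentIn Γᶜ x)
    (hbdd : Bornology.IsBounded Y) :
    ∀ ω ∈ frontier Y, ∀ ε > (0:ℝ), ∃ ω' ∈ frontier Y,
      GoodPoint Y ω' ∧ dist ω ω' < ε := by
  -- Y is open
  obtain ⟨g, hgc, -, hgi⟩ := hJordan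
  have hΓc : IsClosed Γ := by
    rw [← hgi]
    exact ((isCompact_sphere (0 : EuclideanSpace ℝ (Fin 2)) 1).image_of_continuousOn hgc).isClosed
  have hYopen : IsOpen Y := by
    obtain ⟨x, -, rfl⟩ := hY
    exact hΓc.isOpen_compl.connectedComponentIn
  intro ω hω ε hε
  rw [hYopen.frontier_eq] at hω
  obtain ⟨hωcl, hωY⟩ := hω
  obtain ⟨y, hy, hyd⟩ := Metric.mem_closure_iff.mp hωcl ε hε
  set f : ℝ → EuclideanSpace ℝ (Fin 2) := fun t => (1 - t) • y + t • ω with hf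
  have hfc : Continuous f := by fun_prop
  set T : Set ℝ := Icc 0 1 ∩ f ⁻¹' Yᶜ with hT
  have hTc : IsClosed T := isClosed_Icc.inter (hYopen.isClosed_compl.preimage hfc)
  have h1T : (1 : ℝ) ∈ T := ⟨⟨zero_le_one, le_refl 1⟩, by
    simp only [mem_preimage, mem_compl_iff, hf]
    simpa using hωY⟩
  have hTne : T.Nonempty := ⟨1, h1T⟩
  have hTbdd : BddBelow T := ⟨0, fun t ht => ht.1.1⟩
  set t₀ := sInf T with ht₀
  have ht₀T : t₀ ∈ T := hTc.csInf_mem hTne hTbdd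
  have hf0 : f 0 = y := by simp [hf]
  have ht₀0 : 0 < t₀ := by
    rcases (lt_or_eq_of_le ht₀T.1.1) with h | h
    · exact h
    · exfalso; apply ht₀T.2; rw [← h, hf0]; exact hy
  have hseg : ∀ u : ℝ, 0 ≤ u → u < t₀ → f u ∈ Y := by
    intro u hu hu'
    by_contra h
    exact absurd (csInf_le hTbdd ⟨⟨hu, hu'.le.trans ht₀T.1.2⟩, h⟩) (not_le.mpr hu')
  have hkey : ∀ s : ℝ, (1 - s) • f t₀ + s • y = f ((1 - s) * t₀) := by
    intro s; simp only [hf]; module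
  have hcl : f t₀ ∈ closure Y := by
    have hne : (nhdsWithin t₀ (Ico 0 t₀)).NeBot := by
      apply mem_closure_iff_nhdsWithin_neBot.mp
      rw [closure_Ico ht₀0.ne]
      exact ⟨ht₀0.le, le_rfl⟩
    exact mem_closure_of_tendsto ((hfc.tendsto t₀).mono_left nhdsWithin_le_nhds)
      (eventually_nhdsWithin_of_forall fun u (hu : u ∈ Ico 0 t₀) => hseg u hu.1 hu.2)
  refine ⟨f t₀, ?_, ⟨y, ?_, ?_⟩, ?_⟩
  · rw [hYopen.frontier_eq]; exact ⟨hcl, ht₀T.2⟩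
  · intro h; apply ht₀T.2; rw [← h]; exact hy
  · intro s hs
    rw [hkey]
    apply hseg
    · have : (0:ℝ) ≤ 1 - s := by linarith [hs.2]
      positivity
    · nlinarith [hs.1, ht₀0]
  · have hsub : ω - f t₀ = (1 - t₀) • (ω - y) := by simp only [hf]; module
    have habs : |1 - t₀| ≤ 1 := abs_le.mpr ⟨by linarith [ht₀T.1.2], by linarith [ht₀0]⟩
    calc dist ω (f t₀) = ‖(1 - t₀) • (ω - y)‖ := by rw [dist_eq_norm, hsub]
      _ = |1 - t₀| * ‖ω - y‖ := by rw [norm_smul, Real.norm_eq_abs]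
      _ ≤ 1 * ‖ω - y‖ := by
          exact mul_le_mul_of_nonneg_right habs (norm_nonneg _)
      _ = dist ω y := by rw [one_mul, dist_eq_norm]
      _ < ε := hyd
end
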